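/- arXiv:1302.6230 — 9 statements merged into one kernel-verified Lean document; each statement's English description precedes it below -/
import Mathlib

section
/- Let M be a monoid that is atomic (there is a map ν : M → ℕ with ν(α) = 0 if and only if α = 1 and ν(αβ) ≥ ν(α) + ν(β) for all α, β) and cancellative (axb = ayb implies x = y), and let A be its set of atoms (elements α ≠ 1 such that α = βγ implies β = 1 or γ = 1); assume A is finite and generates M. Then an element Δ ∈ M is a fundamental element (i.e., there is a permutation σ of A such that for every a ∈ A there exists Δ_a ∈ M with Δ = a·Δ_a = Δ_a·σ(a)) if and only if Δ is a Garside element (i.e., the set of left divisors of Δ and the set of right divisors of Δ coincide, this set is finite, and it generates M). -/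
/-- An element of a monoid is an *atom* if it is `≠ 1` and indecomposable:
`a = b * c` implies `b = 1` or `c = 1`. -/
def IsAtomElem {M : Type*} [Monoid M] (a : M) : Prop :=
  a ≠ 1 ∧ ∀ b c : M, a = b * c → b = 1 ∨ c = 1

/-- `Δ` is a *fundamental element*: there is a permutation `σ` of the set of atoms such that
for every atom `a` there is `Δₐ` with `Δ = a·Δₐ = Δₐ·σ(a)`. -/
def IsFundamental {M : Type*} [Monoid M] (Δ : M) : Prop :=
  ∃ σ : Equiv.Perm {a : M // IsAtomElem a}, ∀ a : {a : M // IsAtomElem a},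
    ∃ Δa : M, Δ = (a : M) * Δa ∧ Δ = Δa * ((σ a : {a : M // IsAtomElem a}) : M)

/-- `Δ` is a *Garside element*: the set of its left divisors coincides with the set of its
right divisors, this set is finite, and it generates the monoid. -/
def IsGarside {M : Type*} [Monoid M] (Δ : M) : Prop :=
  {u : M | ∃ w : M, Δ = u * w} = {u : M | ∃ w : M, Δ = w * u} ∧
  {u : M | ∃ w : M, Δ = u * w}.Finite ∧
  Submonoid.closure {u : M | ∃ w : M, Δ = u * w} = ⊤

section Aux

variable {M : Type*} [Monoid M]

/-- Every element of a monoid generated by its atoms and admitting a superadditive length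
is a product of a list of atoms, of length at most `ν x`. -/
private lemma exists_atom_list (ν : M → ℕ) (hν1 : ∀ α : M, ν α = 0 ↔ α = 1)
    (hν2 : ∀ α β : M, ν α + ν β ≤ ν (α * β))
    (hgen : Submonoid.closure {a : M | IsAtomElem a} = ⊤) (x : M) :
    ∃ l : List M, (∀ b ∈ l, IsAtomElem b) ∧ l.prod = x ∧ l.length ≤ ν x := by
  have hx : x ∈ Submonoid.closure {a : M | IsAtomElem a} := by
    rw [hgen]; exact Submonoid.mem_top x
  induction hx using Submonoid.closure_induction with
  | mem a ha =>
      refine ⟨[a], by simpa using ha, by simp, ?_⟩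
      have : ν a ≠ 0 := fun h => ha.1 ((hν1 a).mp h)
      simpa using Nat.one_le_iff_ne_zero.mpr this
  | one => exact ⟨[], by simp, by simp, by simp⟩
  | mul x y hx hy ihx ihy =>
      obtain ⟨lx, hlx, hpx, hnx⟩ := ihx
      obtain ⟨ly, hly, hpy, hny⟩ := ihy
      refine ⟨lx ++ ly, ?_, by simp [hpx, hpy], ?_⟩
      · intro b hb
        rcases List.mem_append.mp hb with h | h
        · exact hlx b h
        · exact hly b h
      · calc (lx ++ ly).length = lx.length + ly.length := List.length_append
          _ ≤ ν x + ν y := Nat.add_le_add hnx hny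
          _ ≤ ν (x * y) := hν2 x y

/-- If every atom `b` satisfies `Δ = b * c = c * c'` for suitable `c, c'`, then every
right complement in `Δ` is a left divisor of `Δ`. -/
private lemma right_compl_left_div
    (hcancel : ∀ a x y b : M, a * x * b = a * y * b → x = y) (Δ : M)
    (hA : ∀ b : M, IsAtomElem b → ∃ c c' : M, Δ = b * c ∧ Δ = c * c') :
    ∀ l : List M, (∀ b ∈ l, IsAtomElem b) → ∀ w : M, Δ = l.prod * w →
      ∃ v : M, Δ = w * v := by
  intro l
  induction l using List.reverseRecOn with
  | nil =>
      intro _ w h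
      exact ⟨1, by simpa using h⟩
  | append_singleton l a ih =>
      intro hl w h
      have ha : IsAtomElem a := hl a (by simp)
      have h' : Δ = l.prod * (a * w) := by
        rw [h, List.prod_append, List.prod_singleton, mul_assoc]
      obtain ⟨v', hv'⟩ := ih (fun b hb => hl b (List.mem_append_left _ hb)) (a * w) h'
      obtain ⟨c, c', h1, h2⟩ := hA a ha
      have hc : c = w * v' := by
        apply hcancel a _ _ 1
        simpa using (h1.symm.trans (by rw [hv', mul_assoc]))
      exact ⟨v' * c', by rw [h2, hc, mul_assoc]⟩

/-- If every atom `a` satisfies `Δ = b * c ∧ Δ = c * a` for suitable `b, c`, then every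
left complement in `Δ` is a right divisor of `Δ`. -/
private lemma left_compl_right_div
    (hcancel : ∀ a x y b : M, a * x * b = a * y * b → x = y) (Δ : M)
    (hB : ∀ a : M, IsAtomElem a → ∃ b c : M, Δ = b * c ∧ Δ = c * a) :
    ∀ l : List M, (∀ b ∈ l, IsAtomElem b) → ∀ u : M, Δ = u * l.prod →
      ∃ z : M, Δ = z * u := by
  intro l
  induction l with
  | nil =>
      intro _ u h
      exact ⟨1, by simpa using h⟩
  | cons a l ih =>
      intro hl u h
      have ha : IsAtomElem a := hl a (by simp)
      have h' : Δ = (u * a) * l.prod := by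
        rw [h, List.prod_cons, ← mul_assoc]
      obtain ⟨z, hz⟩ := ih (fun b hb => hl b (List.mem_cons_of_mem _ hb)) (u * a) h'
      obtain ⟨b, c, h1, h2⟩ := hB a ha
      have hc : z * u = c := by
        apply hcancel 1 _ _ a
        simpa [mul_assoc] using (by rw [← mul_assoc] at hz; exact hz.symm.trans h2 :
          z * u * a = c * a)
      exact ⟨b * z, by rw [mul_assoc, hc, h1]⟩

end Aux

/-- In an atomic cancellative monoid whose (finite) set of atoms generates it, an element is
a fundamental element if and only if it is a Garside element. -/
theorem isFundamental_iff_isGarside {M : Type*} [Monoid M]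
    (hatomic : ∃ ν : M → ℕ, (∀ α : M, ν α = 0 ↔ α = 1) ∧
      ∀ α β : M, ν α + ν β ≤ ν (α * β))
    (hcancel : ∀ a x y b : M, a * x * b = a * y * b → x = y)
    (hfin : {a : M | IsAtomElem a}.Finite)
    (hgen : Submonoid.closure {a : M | IsAtomElem a} = ⊤)
    (Δ : M) :
    IsFundamental Δ ↔ IsGarside Δ := by
  obtain ⟨ν, hν1, hν2⟩ := hatomic
  have lcancel : ∀ a x y : M, a * x = a * y → x = y := by
    intro a x y h; exact hcancel a x y 1 (by simpa using h)
  have rcancel : ∀ x y b : M, x * b = y * b → x = y := by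
    intro x y b h; exact hcancel 1 x y b (by simpa using h)
  have decomp := exists_atom_list ν hν1 hν2 hgen
  constructor
  · -- Fundamental → Garside
    rintro ⟨σ, hσ⟩
    -- data for the two list lemmas
    have hA : ∀ b : M, IsAtomElem b → ∃ c c' : M, Δ = b * c ∧ Δ = c * c' := by
      intro b hb
      obtain ⟨Δa, h1, h2⟩ := hσ ⟨b, hb⟩
      exact ⟨Δa, _, h1, h2⟩
    have hB : ∀ a : M, IsAtomElem a → ∃ b c : M, Δ = b * c ∧ Δ = c * a := by
      intro a ha
      obtain ⟨Δb, h1, h2⟩ := hσ (σ.symm ⟨a, ha⟩)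
      refine ⟨_, Δb, h1, ?_⟩
      simpa using h2
    have RL := right_compl_left_div hcancel Δ hA
    have LR := left_compl_right_div hcancel Δ hB
    have hset : {u : M | ∃ w : M, Δ = u * w} = {u : M | ∃ w : M, Δ = w * u} := by
      ext u
      constructor
      · rintro ⟨w, hw⟩
        obtain ⟨l, hl, hp, -⟩ := decomp w
        obtain ⟨z, hz⟩ := LR l hl u (by rw [hp]; exact hw)
        exact ⟨z, hz⟩
      · rintro ⟨w, hw⟩
        obtain ⟨l, hl, hp, -⟩ := decomp w
        obtain ⟨v, hv⟩ := RL l hl u (by rw [hp]; exact hw)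
        exact ⟨v, hv⟩
    refine ⟨hset, ?_, ?_⟩
    · -- finiteness
      have : Finite {a : M // IsAtomElem a} := hfin.to_subtype
      have hL : {l : List {a : M // IsAtomElem a} | l.length ≤ ν Δ}.Finite :=
        List.finite_length_le _ (ν Δ)
      have himg := hL.image (fun l => (l.map Subtype.val).prod)
      apply himg.subset
      rintro u ⟨w, hw⟩
      obtain ⟨l, hl, hp, hn⟩ := decomp u
      have hn' : l.length ≤ ν Δ := by
        refine hn.trans ?_
        calc ν u ≤ ν u + ν w := Nat.le_add_right _ _
          _ ≤ ν (u * w) := hν2 u w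
          _ = ν Δ := by rw [← hw]
      refine ⟨l.attachWith IsAtomElem (fun x hx => hl x hx), by simpa using hn', ?_⟩
      simp only [List.map_attachWith]
      simpa using hp
    · -- generation
      rw [eq_top_iff, ← hgen]
      apply Submonoid.closure_le.mpr
      intro a ha
      apply Submonoid.subset_closure
      obtain ⟨Δa, h1, -⟩ := hσ ⟨a, ha⟩
      exact ⟨Δa, h1⟩
  · -- Garside → Fundamental
    rintro ⟨hset, hfinD, hgenD⟩
    set D : Set M := {u : M | ∃ w : M, Δ = u * w} with hD
    have hone : (1 : M) ∈ D := ⟨Δ, (one_mul Δ).symm⟩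
    have hΔ : Δ ∈ D := ⟨1, (mul_one Δ).symm⟩
    -- every atom is in D
    have hatomD : ∀ a : M, IsAtomElem a → a ∈ D := by
      intro a ha
      have hx : a ∈ Submonoid.closure D := by rw [hgenD]; exact Submonoid.mem_top a
      have key : ∀ x : M, x ∈ Submonoid.closure D → IsAtomElem x → x ∈ D := by
        intro x hx
        induction hx using Submonoid.closure_induction with
        | mem y hy => exact fun _ => hy
        | one => exact fun h => absurd rfl h.1
        | mul x y hx hy ihx ihy =>
            intro hxy
            rcases hxy.2 x y rfl with h | h
            · rw [h, one_mul]; exact ihy (by rwa [h, one_mul] at hxy)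
            · rw [h, mul_one]; exact ihx (by rwa [h, mul_one] at hxy)
      exact key a hx ha
    -- the complement map
    have hpart : ∀ u : M, u ∈ D → ∃ w : M, Δ = u * w := fun u hu => hu
    choose! f hf using hpart
    have hfD : ∀ u ∈ D, f u ∈ D := by
      intro u hu
      have : f u ∈ {u : M | ∃ w : M, Δ = w * u} := ⟨u, hf u hu⟩
      rwa [← hset] at this
    have hfinj : ∀ u ∈ D, ∀ v ∈ D, f u = f v → u = v := by
      intro u hu v hv h
      exact rcancel u v (f u) ((hf u hu).symm.trans (by rw [h]; exact hf v hv))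
    -- f is surjective on D
    have : Finite D := hfinD.to_subtype
    have hfsurj : ∀ v ∈ D, ∃ u ∈ D, f u = v := by
      intro v hv
      let F : D → D := fun x => ⟨f x, hfD x x.2⟩
      have Finj : Function.Injective F := by
        rintro ⟨u, hu⟩ ⟨v', hv'⟩ h
        exact Subtype.ext (hfinj u hu v' hv' (congrArg Subtype.val h))
      obtain ⟨⟨u, hu⟩, hu'⟩ := Finite.injective_iff_surjective.mp Finj ⟨v, hv⟩
      exact ⟨u, hu, congrArg Subtype.val hu'⟩
    have hf1 : f 1 = Δ := by
      have := hf 1 hone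
      rwa [one_mul, eq_comm] at this
    have hfΔ : f Δ = 1 := by
      have h := hf Δ hΔ
      exact lcancel Δ (f Δ) 1 (by rw [mul_one, ← h])
    -- conjugation identity
    have hconj : ∀ d ∈ D, d * Δ = Δ * f (f d) := by
      intro d hd
      have h1 := hf d hd
      have h2 := hf (f d) (hfD d hd)
      calc d * Δ = d * (f d * f (f d)) := by rw [← h2]
        _ = (d * f d) * f (f d) := by rw [mul_assoc]
        _ = Δ * f (f d) := by rw [← h1]
    -- f ∘ f preserves atoms
    have hpres : ∀ a : M, IsAtomElem a → IsAtomElem (f (f a)) := by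
      intro a ha
      have haD := hatomD a ha
      have hffD : f (f a) ∈ D := hfD _ (hfD a haD)
      constructor
      · intro h
        apply ha.1
        apply rcancel a 1 Δ
        rw [one_mul, hconj a haD, h, mul_one]
      · intro u v huv
        -- u and v are in D
        have huD : u ∈ D := ⟨v * f (f (f a)), by
          rw [← mul_assoc, ← huv]; exact hf _ hffD⟩
        have hvD : v ∈ D := by
          have hffR : f (f a) ∈ {u : M | ∃ w : M, Δ = w * u} := hset ▸ hffD
          obtain ⟨z, hz⟩ := hffR
          have : v ∈ {u : M | ∃ w : M, Δ = w * u} :=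
            ⟨z * u, by rw [hz, huv, mul_assoc]⟩
          rwa [← hset] at this
        obtain ⟨d', hd', hd'v⟩ := hfsurj u (huD)
        obtain ⟨d, hdD, hdu⟩ := hfsurj d' hd'
        obtain ⟨e', he', he'v⟩ := hfsurj v (hvD)
        obtain ⟨e, heD, heu⟩ := hfsurj e' he'
        have hu' : f (f d) = u := by rw [hdu, hd'v]
        have hv' : f (f e) = v := by rw [heu, he'v]
        have hade : a = d * e := by
          apply rcancel a (d * e) Δ
          rw [hconj a haD, huv, ← hu', ← hv', ← mul_assoc, ← hconj d hdD,
            mul_assoc, ← hconj e heD, ← mul_assoc]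
        rcases ha.2 d e hade with h | h
        · left
          rw [← hu', h, hf1, hfΔ]
        · right
          rw [← hv', h, hf1, hfΔ]
    -- build the permutation
    have : Finite {a : M // IsAtomElem a} := hfin.to_subtype
    let g : {a : M // IsAtomElem a} → {a : M // IsAtomElem a} :=
      fun a => ⟨f (f a), hpres a a.2⟩
    have ginj : Function.Injective g := by
      rintro ⟨a, ha⟩ ⟨b, hb⟩ h
      have h' : f (f a) = f (f b) := congrArg Subtype.val h
      apply Subtype.ext
      apply rcancel a b Δ
      rw [hconj a (hatomD a ha), hconj b (hatomD b hb), h']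
    refine ⟨Equiv.ofBijective g (Finite.injective_iff_bijective.mp ginj), ?_⟩
    rintro ⟨a, ha⟩
    have haD := hatomD a ha
    refine ⟨f a, hf a haD, ?_⟩
    have : ((Equiv.ofBijective g (Finite.injective_iff_bijective.mp ginj) ⟨a, ha⟩ :
        {a : M // IsAtomElem a}) : M) = f (f a) := rfl
    rw [this]
    exact hf (f a) (hfD a haD)
end

section
/- Let M be an atomic cancellative monoid whose finite set A of atoms generates M, and let Δ ∈ M be a fundamental element, i.e., there is a permutation σ of A such that for every a ∈ A there exists Δ_a ∈ M with Δ = a·Δ_a = Δ_a·σ(a). Then for every U ∈ M there exists a positive integer ℓ such that U left-divides Δ^ℓ and U right-divides Δ^ℓ; in particular M satisfies Ore's condition (any two elements have a common right-multiple and a common left-multiple). -/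
/-- If `Δ` is a fundamental element of an atomic cancellative monoid whose finite set of atoms
generates it, then every `U` left- and right-divides some positive power `Δ^ℓ`; in particular
the monoid satisfies Ore's condition: any two elements have a common right-multiple and a
common left-multiple. -/
theorem dvd_pow_fundamental_and_ore {M : Type*} [Monoid M]
    (hatomic : ∃ ν : M → ℕ, (∀ α : M, ν α = 0 ↔ α = 1) ∧
      ∀ α β : M, ν α + ν β ≤ ν (α * β))
    (hcancel : ∀ a x y b : M, a * x * b = a * y * b → x = y)
    (hfin : {a : M | IsAtomElem a}.Finite)
    (hgen : Submonoid.closure {a : M | IsAtomElem a} = ⊤)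
    (Δ : M) (hΔ : IsFundamental Δ) :
    (∀ U : M, ∃ ℓ : ℕ, 0 < ℓ ∧ (∃ w : M, Δ ^ ℓ = U * w) ∧ (∃ w : M, Δ ^ ℓ = w * U)) ∧
    (∀ x y : M,
      (∃ z : M, (∃ w : M, z = x * w) ∧ (∃ w : M, z = y * w)) ∧
      (∃ z : M, (∃ w : M, z = w * x) ∧ (∃ w : M, z = w * y))) := by
  obtain ⟨σ, hσ⟩ := hΔ
  have hmem : ∀ v : M, v ∈ Submonoid.closure {a : M | IsAtomElem a} := by
    intro v; rw [hgen]; trivial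
  -- commutation relations
  have key1 : ∀ v : M, ∃ v' : M, v * Δ = Δ * v' := by
    intro v
    induction hmem v using Submonoid.closure_induction with
    | mem a ha =>
        obtain ⟨Δa, h1, h2⟩ := hσ ⟨a, ha⟩
        refine ⟨((σ ⟨a, ha⟩ : {a : M // IsAtomElem a}) : M), ?_⟩
        calc a * Δ = a * Δa * ((σ ⟨a, ha⟩ : {a : M // IsAtomElem a}) : M) := by
              rw [mul_assoc, ← h2]
          _ = Δ * _ := by rw [← h1]
    | one => exact ⟨1, by simp⟩
    | mul x y _ _ hx hy =>
        obtain ⟨x', hx'⟩ := hx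
        obtain ⟨y', hy'⟩ := hy
        exact ⟨x' * y', by rw [mul_assoc, hy', ← mul_assoc, hx', mul_assoc]⟩
  have key2 : ∀ v : M, ∃ v' : M, Δ * v = v' * Δ := by
    intro v
    induction hmem v using Submonoid.closure_induction with
    | mem b hb =>
        set a := σ.symm ⟨b, hb⟩ with ha
        obtain ⟨Δa, h1, h2⟩ := hσ a
        have hsb : ((σ a : {a : M // IsAtomElem a}) : M) = b := by
          rw [ha, Equiv.apply_symm_apply]
        rw [hsb] at h2
        refine ⟨(a : M), ?_⟩
        calc Δ * b = (a : M) * Δa * b := by rw [← h1]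
          _ = (a : M) * (Δa * b) := by rw [mul_assoc]
          _ = (a : M) * Δ := by rw [← h2]
    | one => exact ⟨1, by simp⟩
    | mul x y _ _ hx hy =>
        obtain ⟨x', hx'⟩ := hx
        obtain ⟨y', hy'⟩ := hy
        exact ⟨x' * y', by rw [← mul_assoc, hx', mul_assoc, hy', ← mul_assoc]⟩
  have key1p : ∀ (n : ℕ) (v : M), ∃ v' : M, v * Δ ^ n = Δ ^ n * v' := by
    intro n
    induction n with
    | zero => exact fun v => ⟨v, by simp⟩
    | succ n ih =>
        intro v
        obtain ⟨v', hv'⟩ := key1 v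
        obtain ⟨v'', hv''⟩ := ih v'
        exact ⟨v'', by rw [pow_succ', ← mul_assoc, hv', mul_assoc, hv'', ← mul_assoc]⟩
  have key2p : ∀ (n : ℕ) (v : M), ∃ v' : M, Δ ^ n * v = v' * Δ ^ n := by
    intro n
    induction n with
    | zero => exact fun v => ⟨v, by simp⟩
    | succ n ih =>
        intro v
        obtain ⟨v', hv'⟩ := ih v
        obtain ⟨v'', hv''⟩ := key2 v'
        exact ⟨v'', by rw [pow_succ', mul_assoc, hv', ← mul_assoc, hv'', mul_assoc]⟩
  -- left divisibility
  have left : ∀ U : M, ∃ (n : ℕ) (w : M), Δ ^ n = U * w := by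
    intro U
    induction hmem U using Submonoid.closure_induction with
    | mem a ha =>
        obtain ⟨Δa, h1, _⟩ := hσ ⟨a, ha⟩
        exact ⟨1, Δa, by rw [pow_one]; exact h1⟩
    | one => exact ⟨0, 1, by simp⟩
    | mul x y _ _ hx hy =>
        obtain ⟨m, wx, hx'⟩ := hx
        obtain ⟨n, wy, hy'⟩ := hy
        obtain ⟨w', hw'⟩ := key1p n wx
        refine ⟨m + n, wy * w', ?_⟩
        rw [pow_add, hx', mul_assoc, hw', hy']
        rw [mul_assoc, mul_assoc]
  have right : ∀ U : M, ∃ (n : ℕ) (w : M), Δ ^ n = w * U := by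
    intro U
    induction hmem U using Submonoid.closure_induction with
    | mem b hb =>
        set a := σ.symm ⟨b, hb⟩ with ha
        obtain ⟨Δa, _, h2⟩ := hσ a
        have hsb : ((σ a : {a : M // IsAtomElem a}) : M) = b := by
          rw [ha, Equiv.apply_symm_apply]
        rw [hsb] at h2
        exact ⟨1, Δa, by rw [pow_one]; exact h2⟩
    | one => exact ⟨0, 1, by simp⟩
    | mul x y _ _ hx hy =>
        obtain ⟨m, wx, hx'⟩ := hx
        obtain ⟨n, wy, hy'⟩ := hy
        obtain ⟨w', hw'⟩ := key2p m wy
        refine ⟨m + n, w' * wx, ?_⟩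
        rw [pow_add, hy', ← mul_assoc, hw', hx']
        rw [mul_assoc, mul_assoc, ← mul_assoc w' wx]
  have main : ∀ U : M, ∃ ℓ : ℕ, 0 < ℓ ∧ (∃ w : M, Δ ^ ℓ = U * w) ∧ (∃ w : M, Δ ^ ℓ = w * U) := by
    intro U
    obtain ⟨m, wl, hl⟩ := left U
    obtain ⟨n, wr, hr⟩ := right U
    refine ⟨m + n + 1, by omega, ⟨wl * Δ ^ (n + 1), ?_⟩, ⟨Δ ^ (m + 1) * wr, ?_⟩⟩
    · have : m + n + 1 = m + (n + 1) := by omega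
      rw [this, pow_add, hl, mul_assoc]
    · have : m + n + 1 = m + 1 + n := by omega
      rw [this, pow_add, hr, mul_assoc]
  refine ⟨main, fun x y => ?_⟩
  obtain ⟨lx, _, ⟨wxl, hxl⟩, ⟨wxr, hxr⟩⟩ := main x
  obtain ⟨ly, _, ⟨wyl, hyl⟩, ⟨wyr, hyr⟩⟩ := main y
  constructor
  · refine ⟨Δ ^ (lx + ly), ⟨wxl * Δ ^ ly, ?_⟩, ⟨wyl * Δ ^ lx, ?_⟩⟩
    · rw [pow_add, hxl, mul_assoc]
    · rw [add_comm, pow_add, hyl, mul_assoc]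
  · refine ⟨Δ ^ (lx + ly), ⟨Δ ^ ly * wxr, ?_⟩, ⟨Δ ^ lx * wyr, ?_⟩⟩
    · rw [add_comm, pow_add, hxr, mul_assoc]
    · rw [pow_add, hyr, mul_assoc]
end

section
/- Let M be an atomic cancellative monoid whose finite set A of atoms generates M, and let Δ ∈ M be a fundamental element with associated permutation σ of A (so Δ = a·Δ_a = Δ_a·σ(a) for every atom a), and let N be the order of σ in the symmetric group on A. Then Λ := Δ^N lies in the center of M, i.e., Λ·x = x·Λ for all x ∈ M. -/
/-- If `Δ` is a fundamental element of an atomic cancellative monoid whose finite set of atoms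
generates it, with associated permutation `σ` of the atoms, and `N = ord(σ)` is the order of
`σ`, then `Λ = Δ^N` is central. -/
theorem pow_orderOf_mem_center {M : Type*} [Monoid M]
    (hatomic : ∃ ν : M → ℕ, (∀ α : M, ν α = 0 ↔ α = 1) ∧
      ∀ α β : M, ν α + ν β ≤ ν (α * β))
    (hcancel : ∀ a x y b : M, a * x * b = a * y * b → x = y)
    (hfin : {a : M | IsAtomElem a}.Finite)
    (hgen : Submonoid.closure {a : M | IsAtomElem a} = ⊤)
    (Δ : M) (σ : Equiv.Perm {a : M // IsAtomElem a})
    (hfund : ∀ a : {a : M // IsAtomElem a},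
      ∃ Δa : M, Δ = (a : M) * Δa ∧ Δ = Δa * ((σ a : {a : M // IsAtomElem a}) : M)) :
    ∀ x : M, Δ ^ (orderOf σ) * x = x * Δ ^ (orderOf σ) := by
  -- basic commutation: a * Δ = Δ * σ a for each atom a
  have key : ∀ a : {a : M // IsAtomElem a}, (a : M) * Δ = Δ * ((σ a : {a : M // IsAtomElem a}) : M) := by
    intro a
    obtain ⟨Δa, h1, h2⟩ := hfund a
    calc (a : M) * Δ = (a : M) * (Δa * ((σ a : {a : M // IsAtomElem a}) : M)) := by rw [← h2]
    _ = ((a : M) * Δa) * ((σ a : {a : M // IsAtomElem a}) : M) := by rw [mul_assoc]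
    _ = Δ * ((σ a : {a : M // IsAtomElem a}) : M) := by rw [← h1]
  -- iterated: a * Δ^n = Δ^n * (σ^n a)
  have key' : ∀ (n : ℕ) (a : {a : M // IsAtomElem a}),
      (a : M) * Δ ^ n = Δ ^ n * (((σ ^ n) a : {a : M // IsAtomElem a}) : M) := by
    intro n
    induction n with
    | zero => intro a; simp
    | succ n ih =>
      intro a
      have : (a : M) * Δ ^ (n + 1) = ((a : M) * Δ) * Δ ^ n := by
        rw [pow_succ', mul_assoc]
      rw [this, key a, mul_assoc, ih (σ a), ← mul_assoc, ← pow_succ', pow_succ σ n,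
        Equiv.Perm.mul_apply]
  -- so atoms commute with Λ
  have atom_comm : ∀ a : {a : M // IsAtomElem a},
      Δ ^ (orderOf σ) * (a : M) = (a : M) * Δ ^ (orderOf σ) := by
    intro a
    have := key' (orderOf σ) a
    rw [pow_orderOf_eq_one σ] at this
    simp only [Equiv.Perm.one_apply] at this
    exact this.symm
  -- closure induction
  intro x
  have hx : x ∈ Submonoid.closure {a : M | IsAtomElem a} := by rw [hgen]; trivial
  induction hx using Submonoid.closure_induction with
  | mem a ha => exact atom_comm ⟨a, ha⟩
  | one => simp
  | mul y z _ _ hy hz => rw [← mul_assoc, hy, mul_assoc, hz, mul_assoc]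
end

section
/- In the monoid M₆ presented by generators a, b, c, d, e, f and relations abf = bfa = fab, ace = cea = eac, def = efd = fde, ad = da, cd = dc, bc = cb, bd = db, be = eb, cf = fc, the equality c·d·e·aᵏ·f = c·e·aᵏ·f·d holds for every integer k ≥ 1. -/
/-- The six generators of the monoid `M₆`. -/
inductive L6 : Type
  | a | b | c | d | e | f

open FreeMonoid

/-- The defining relations of `M₆`:
`abf = bfa = fab`, `ace = cea = eac`, `def = efd = fde`,
`ad = da`, `cd = dc`, `bc = cb`, `bd = db`, `be = eb`, `cf = fc`. -/
inductive R6 : FreeMonoid L6 → FreeMonoid L6 → Prop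
  | abf₁ : R6 (of L6.a * of L6.b * of L6.f) (of L6.b * of L6.f * of L6.a)
  | abf₂ : R6 (of L6.a * of L6.b * of L6.f) (of L6.f * of L6.a * of L6.b)
  | ace₁ : R6 (of L6.a * of L6.c * of L6.e) (of L6.c * of L6.e * of L6.a)
  | ace₂ : R6 (of L6.a * of L6.c * of L6.e) (of L6.e * of L6.a * of L6.c)
  | def₁ : R6 (of L6.d * of L6.e * of L6.f) (of L6.e * of L6.f * of L6.d)
  | def₂ : R6 (of L6.d * of L6.e * of L6.f) (of L6.f * of L6.d * of L6.e)
  | ad : R6 (of L6.a * of L6.d) (of L6.d * of L6.a)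
  | cd : R6 (of L6.c * of L6.d) (of L6.d * of L6.c)
  | bc : R6 (of L6.b * of L6.c) (of L6.c * of L6.b)
  | bd : R6 (of L6.b * of L6.d) (of L6.d * of L6.b)
  | be : R6 (of L6.b * of L6.e) (of L6.e * of L6.b)
  | cf : R6 (of L6.c * of L6.f) (of L6.f * of L6.c)

/-- The monoid `M₆` presented by the generators `a, …, f` and the relations `R6`. -/
abbrev M6 : Type := PresentedMonoid R6

/-- The image of a generator in `M₆`. -/
def g (x : L6) : M6 := PresentedMonoid.of R6 x

private lemma grel {u v : FreeMonoid L6} (h : R6 u v) :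
    PresentedMonoid.mk R6 u = PresentedMonoid.mk R6 v :=
  Quotient.sound (ConGen.Rel.of _ _ h)

private lemma hace : g L6.a * g L6.c * g L6.e = g L6.c * g L6.e * g L6.a := grel R6.ace₁
private lemma hdef : g L6.d * g L6.e * g L6.f = g L6.e * g L6.f * g L6.d := grel R6.def₁
private lemma had : g L6.a * g L6.d = g L6.d * g L6.a := grel R6.ad
private lemma hcd : g L6.c * g L6.d = g L6.d * g L6.c := grel R6.cd

private lemma cea_pow : ∀ k : ℕ, g L6.c * g L6.e * (g L6.a) ^ k =
    (g L6.a) ^ k * (g L6.c * g L6.e) := by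
  intro k
  induction k with
  | zero => simp
  | succ n ih =>
    rw [pow_succ, ← mul_assoc, ih, mul_assoc, ← hace]
    simp only [mul_assoc]

private lemma ad_pow : ∀ k : ℕ, (g L6.a) ^ k * g L6.d = g L6.d * (g L6.a) ^ k := by
  intro k
  induction k with
  | zero => simp
  | succ n ih => rw [pow_succ, mul_assoc, had, ← mul_assoc, ih, mul_assoc]

/-- In `M₆`, the equality `c·d·e·aᵏ·f = c·e·aᵏ·f·d` holds for every `k ≥ 1`. -/
theorem cdeakf_eq_ceakfd : ∀ k : ℕ, 1 ≤ k →
    g L6.c * g L6.d * g L6.e * (g L6.a) ^ k * g L6.f =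
    g L6.c * g L6.e * (g L6.a) ^ k * g L6.f * g L6.d := by
  intro k _
  calc g L6.c * g L6.d * g L6.e * (g L6.a) ^ k * g L6.f
      = g L6.d * (g L6.c * g L6.e * (g L6.a) ^ k) * g L6.f := by
        rw [hcd]; simp only [mul_assoc]
    _ = g L6.d * ((g L6.a) ^ k * (g L6.c * g L6.e)) * g L6.f := by rw [cea_pow]
    _ = (g L6.a) ^ k * (g L6.c * (g L6.d * g L6.e * g L6.f)) := by
        rw [← mul_assoc, ← ad_pow]
        simp only [← mul_assoc]
        rw [mul_assoc ((g L6.a)^k) (g L6.d) (g L6.c), ← hcd]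
        simp only [mul_assoc]
    _ = (g L6.a) ^ k * (g L6.c * (g L6.e * g L6.f * g L6.d)) := by rw [hdef]
    _ = g L6.c * g L6.e * (g L6.a) ^ k * g L6.f * g L6.d := by
        rw [cea_pow]
        simp only [mul_assoc]
end

section
/- In the monoid M₆ presented by generators a, b, c, d, e, f and relations abf = bfa = fab, ace = cea = eac, def = efd = fde, ad = da, cd = dc, bc = cb, bd = db, be = eb, cf = fc, the inequality d·e·aᵏ·f ≠ e·aᵏ·f·d holds for every integer k ≥ 1; consequently M₆ is not cancellative. -/
open FreeMonoid

namespace M6aux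

/-- `AdjP x y w` : the two-letter word `xy` occurs as a factor of `w`. -/
def AdjP (x y : L6) : List L6 → Prop
  | [] => False
  | z :: t => (z = x ∧ t.head? = some y) ∨ AdjP x y t

lemma adjP_append_left (x y : L6) {w : List L6} (h : AdjP x y w) :
    ∀ l : List L6, AdjP x y (l ++ w)
  | [] => h
  | _ :: l => Or.inr (adjP_append_left x y h l)

lemma adjP_append_right (x y : L6) : ∀ {w : List L6} (r : List L6),
    AdjP x y w → AdjP x y (w ++ r)
  | [], _, h => h.elim
  | z :: t, r, h => by
    rcases h with ⟨hz, hh⟩ | h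
    · refine Or.inl ⟨hz, ?_⟩
      cases t with
      | nil => simp at hh
      | cons q s => simpa using hh
    · exact Or.inr (adjP_append_right x y r h)

/-- The separating property: preserved by all relations, closed under contexts,
but false on `d e aᵏ f`. -/
def P (w : FreeMonoid L6) : Prop :=
  L6.b ∈ w.toList ∨ L6.c ∈ w.toList ∨ AdjP L6.a L6.d w.toList ∨ AdjP L6.d L6.a w.toList ∨
    AdjP L6.f L6.d w.toList ∨ (AdjP L6.d L6.e w.toList ∧ AdjP L6.e L6.f w.toList)

lemma P.mul_right {w : FreeMonoid L6} (h : P w) (z : FreeMonoid L6) : P (w * z) := by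
  rcases h with h | h | h | h | h | ⟨h1, h2⟩ <;>
    simp only [P, toList_mul, List.mem_append]
  · exact Or.inl (Or.inl h)
  · exact Or.inr (Or.inl (Or.inl h))
  · exact Or.inr (Or.inr (Or.inl (adjP_append_right _ _ _ h)))
  · exact Or.inr (Or.inr (Or.inr (Or.inl (adjP_append_right _ _ _ h))))
  · exact Or.inr (Or.inr (Or.inr (Or.inr (Or.inl (adjP_append_right _ _ _ h)))))
  · exact Or.inr (Or.inr (Or.inr (Or.inr (Or.inr
      ⟨adjP_append_right _ _ _ h1, adjP_append_right _ _ _ h2⟩))))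

lemma P.mul_left {w : FreeMonoid L6} (h : P w) (z : FreeMonoid L6) : P (z * w) := by
  rcases h with h | h | h | h | h | ⟨h1, h2⟩ <;>
    simp only [P, toList_mul, List.mem_append]
  · exact Or.inl (Or.inr h)
  · exact Or.inr (Or.inl (Or.inr h))
  · exact Or.inr (Or.inr (Or.inl (adjP_append_left _ _ h _)))
  · exact Or.inr (Or.inr (Or.inr (Or.inl (adjP_append_left _ _ h _))))
  · exact Or.inr (Or.inr (Or.inr (Or.inr (Or.inl (adjP_append_left _ _ h _)))))
  · exact Or.inr (Or.inr (Or.inr (Or.inr (Or.inr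
      ⟨adjP_append_left _ _ h1 _, adjP_append_left _ _ h2 _⟩))))

/-- The coarse congruence `x = y ∨ (P x ∧ P y)`. -/
def econ : Con (FreeMonoid L6) where
  r x y := x = y ∨ (P x ∧ P y)
  iseqv := by
    refine ⟨fun _ => Or.inl rfl, ?_, ?_⟩
    · rintro x y (rfl | ⟨h1, h2⟩)
      · exact Or.inl rfl
      · exact Or.inr ⟨h2, h1⟩
    · rintro x y z (rfl | ⟨h1, h2⟩) h
      · exact h
      · rcases h with rfl | ⟨h3, h4⟩
        · exact Or.inr ⟨h1, h2⟩
        · exact Or.inr ⟨h1, h4⟩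
  mul' := by
    rintro w x y z (rfl | ⟨h1, h2⟩) (rfl | ⟨h3, h4⟩)
    · exact Or.inl rfl
    · exact Or.inr ⟨h3.mul_left w, h4.mul_left w⟩
    · exact Or.inr ⟨h1.mul_right y, h2.mul_right y⟩
    · exact Or.inr ⟨h1.mul_right y, h2.mul_right z⟩

lemma rels_le : ∀ x y, R6 x y → econ x y := by
  intro x y h
  refine h.casesOn ?_ ?_ ?_ ?_ ?_ ?_ ?_ ?_ ?_ ?_ ?_ ?_ <;>
    exact Or.inr ⟨by simp [P, AdjP, toList_mul, toList_of], by simp [P, AdjP, toList_mul, toList_of]⟩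

lemma toList_pow (x : L6) : ∀ k : ℕ, ((of x : FreeMonoid L6) ^ k).toList = List.replicate k x
  | 0 => rfl
  | k + 1 => by
    rw [pow_succ, toList_mul, toList_pow x k, toList_of, List.replicate_succ']

lemma adj_rep (x y : L6) : ∀ k : ℕ,
    AdjP x y (List.replicate k L6.a ++ [L6.f]) → x = L6.a ∧ (y = L6.a ∨ y = L6.f)
  | 0 => by intro h; simp [AdjP] at h
  | k + 1 => by
    intro h
    rw [List.replicate_succ] at h
    rcases h with ⟨rfl, hh⟩ | h
    · refine ⟨rfl, ?_⟩
      cases k with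
      | zero => simp at hh; exact Or.inr hh.symm
      | succ n => rw [List.replicate_succ] at hh; simp at hh; exact Or.inl hh.symm
    · exact adj_rep x y k h

lemma key (k : ℕ) (x y : L6)
    (h : AdjP x y (L6.d :: L6.e :: (List.replicate (k + 1) L6.a ++ [L6.f]))) :
    (x = L6.d ∧ y = L6.e) ∨ (x = L6.e ∧ y = L6.a) ∨ (x = L6.a ∧ (y = L6.a ∨ y = L6.f)) := by
  rcases h with ⟨rfl, hh⟩ | ⟨rfl, hh⟩ | h
  · simp at hh; exact Or.inl ⟨rfl, hh.symm⟩
  · rw [List.replicate_succ] at hh; simp at hh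
    exact Or.inr (Or.inl ⟨rfl, hh.symm⟩)
  · exact Or.inr (Or.inr (adj_rep x y (k + 1) h))

lemma notP (k : ℕ) :
    ¬ P (of L6.d * of L6.e * (of L6.a) ^ (k + 1) * of L6.f) := by
  have hl : (of L6.d * of L6.e * (of L6.a) ^ (k + 1) * of L6.f).toList
      = L6.d :: L6.e :: (List.replicate (k + 1) L6.a ++ [L6.f]) := by
    simp [toList_mul, toList_of, toList_pow]
  intro hp
  rw [P, hl] at hp
  rcases hp with h | h | h | h | h | ⟨h1, h2⟩
  · simp [List.mem_append, List.mem_replicate] at h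
  · simp [List.mem_append, List.mem_replicate] at h
  · rcases key k _ _ h with ⟨h1, h2⟩ | ⟨h1, h2⟩ | ⟨h1, h2⟩ <;> simp_all
  · rcases key k _ _ h with ⟨h1, h2⟩ | ⟨h1, h2⟩ | ⟨h1, h2⟩ <;> simp_all
  · rcases key k _ _ h with ⟨h1, h2⟩ | ⟨h1, h2⟩ | ⟨h1, h2⟩ <;> simp_all
  · rcases key k _ _ h2 with ⟨h3, h4⟩ | ⟨h3, h4⟩ | ⟨h3, h4⟩ <;> simp_all

lemma mk_rel {u v : FreeMonoid L6} (h : R6 u v) :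
    PresentedMonoid.mk R6 u = PresentedMonoid.mk R6 v :=
  Quotient.sound (ConGen.Rel.of u v h)

lemma g_eq (x : L6) : g x = PresentedMonoid.mk R6 (of x) := rfl

lemma grel {u v : FreeMonoid L6} (h : R6 u v) :
    PresentedMonoid.mk R6 u = PresentedMonoid.mk R6 v := mk_rel h

lemma hcf : g L6.c * g L6.f = g L6.f * g L6.c := by
  simpa only [g_eq, ← map_mul] using mk_rel R6.cf

lemma hcd : g L6.c * g L6.d = g L6.d * g L6.c := by
  simpa only [g_eq, ← map_mul] using mk_rel R6.cd

lemma had : g L6.a * g L6.d = g L6.d * g L6.a := by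
  simpa only [g_eq, ← map_mul] using mk_rel R6.ad

lemma hace : g L6.a * g L6.c * g L6.e = g L6.e * g L6.a * g L6.c := by
  simpa only [g_eq, ← map_mul] using mk_rel R6.ace₂

lemma hdef : g L6.d * g L6.e * g L6.f = g L6.e * g L6.f * g L6.d := by
  simpa only [g_eq, ← map_mul] using mk_rel R6.def₁

lemma cace (x : M6) :
    g L6.a * (g L6.c * (g L6.e * x)) = g L6.e * (g L6.a * (g L6.c * x)) := by
  rw [← mul_assoc, ← mul_assoc, hace, mul_assoc, mul_assoc]

lemma cda (x : M6) : g L6.d * (g L6.a * x) = g L6.a * (g L6.d * x) := by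
  rw [← mul_assoc, ← had, mul_assoc]

lemma cdc (x : M6) : g L6.d * (g L6.c * x) = g L6.c * (g L6.d * x) := by
  rw [← mul_assoc, ← hcd, mul_assoc]

lemma ccf (x : M6) : g L6.c * (g L6.f * x) = g L6.f * (g L6.c * x) := by
  rw [← mul_assoc, hcf, mul_assoc]

lemma hdef' : g L6.d * (g L6.e * g L6.f) = g L6.e * (g L6.f * g L6.d) := by
  rw [← mul_assoc, hdef, mul_assoc]

/-- The witness equality `deaf · c = eafd · c` in `M₆`. -/
lemma deafc : (g L6.d * g L6.e * g L6.a * g L6.f) * g L6.c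
    = (g L6.e * g L6.a * g L6.f * g L6.d) * g L6.c := by
  simp only [mul_assoc]
  rw [show g L6.f * g L6.c = g L6.c * g L6.f from hcf.symm]
  rw [show g L6.e * (g L6.a * (g L6.c * g L6.f)) = g L6.a * (g L6.c * (g L6.e * g L6.f)) from
    (cace (g L6.f)).symm]
  rw [cda, cdc, hdef', cace, ccf, hcd]

end M6aux

/-- In `M₆`, the inequality `d·e·aᵏ·f ≠ e·aᵏ·f·d` holds for every `k ≥ 1`; consequently
`M₆` is not cancellative. -/
theorem deakf_ne_eakfd_and_not_cancellative :
    (∀ k : ℕ, 1 ≤ k →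
      g L6.d * g L6.e * (g L6.a) ^ k * g L6.f ≠ g L6.e * (g L6.a) ^ k * g L6.f * g L6.d) ∧
    ¬ (∀ A X Y B : M6, A * X * B = A * Y * B → X = Y) := by
  have main : ∀ k : ℕ, 1 ≤ k →
      g L6.d * g L6.e * (g L6.a) ^ k * g L6.f ≠ g L6.e * (g L6.a) ^ k * g L6.f * g L6.d := by
    intro k hk h
    obtain ⟨k', rfl⟩ : ∃ k', k = k' + 1 := ⟨k - 1, (Nat.succ_pred_eq_of_pos hk).symm⟩
    have h' : PresentedMonoid.mk R6 (of L6.d * of L6.e * (of L6.a) ^ (k' + 1) * of L6.f)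
        = PresentedMonoid.mk R6 (of L6.e * (of L6.a) ^ (k' + 1) * of L6.f * of L6.d) := by
      simp only [map_mul, map_pow]
      exact h
    have hc : conGen R6 (of L6.d * of L6.e * (of L6.a) ^ (k' + 1) * of L6.f)
        (of L6.e * (of L6.a) ^ (k' + 1) * of L6.f * of L6.d) := Quotient.exact h'
    have he := Con.le_def.mp (Con.conGen_le.mpr M6aux.rels_le) hc
    rcases he with heq | ⟨hp, _⟩
    · have := congrArg FreeMonoid.toList heq
      simp [toList_mul, toList_of, M6aux.toList_pow, List.replicate_succ] at this
    · exact M6aux.notP k' hp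
  refine ⟨main, fun hcan => ?_⟩
  have h1 := main 1 le_rfl
  rw [pow_one] at h1
  exact h1 (hcan 1 _ _ (g L6.c) (by simpa [one_mul] using M6aux.deafc))
end

section
/- For integers m, n ≥ 1, the group G_{m,n} presented by generators s, t_1, …, t_m, u_1, …, u_n subject to the cyclic relations s·t_1⋯t_m = t_j⋯t_m·s·t_1⋯t_{j−1} for all 1 ≤ j ≤ m+1 (all cyclic rotations of s·t_1⋯t_m are equal), the cyclic relations s·u_1⋯u_n = u_j⋯u_n·s·u_1⋯u_{j−1} for all 1 ≤ j ≤ n+1 (all cyclic rotations of s·u_1⋯u_n are equal), and t_i·u_j = u_j·t_i for all 1 ≤ i ≤ m, 1 ≤ j ≤ n, is isomorphic to ℤ × F_m × F_n, where F_m and F_n are free groups of ranks m and n. -/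
namespace Gmn
/-- Generators of `G_{m,n}`: `s`, `t 1, …, t m`, `u 1, …, u n`. -/
inductive Gen (m n : ℕ) : Type
  | s : Gen m n
  | t : Fin m → Gen m n
  | u : Fin n → Gen m n

/-- The word `s · t 1 ⋯ t m`. -/
def wordT (m n : ℕ) : List (Gen m n) := Gen.s :: List.ofFn (fun i => Gen.t i)

/-- The word `s · u 1 ⋯ u n`. -/
def wordU (m n : ℕ) : List (Gen m n) := Gen.s :: List.ofFn (fun j => Gen.u j)

/-- The word `s · t 1 ⋯ t m · u 1 ⋯ u n`. -/
def wordFull (m n : ℕ) : List (Gen m n) :=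
  Gen.s :: (List.ofFn (fun i => Gen.t i) ++ List.ofFn (fun j => Gen.u j))

/-- The defining relations of `G_{m,n}`: all cyclic rotations of `s·t_1⋯t_m` are equal,
all cyclic rotations of `s·u_1⋯u_n` are equal, and `t_i · u_j = u_j · t_i` for all `i, j`. -/
inductive Rel (m n : ℕ) : FreeMonoid (Gen m n) → FreeMonoid (Gen m n) → Prop
  | rotT (j : ℕ) :
      Rel m n (FreeMonoid.ofList (wordT m n)) (FreeMonoid.ofList ((wordT m n).rotate j))
  | rotU (j : ℕ) :
      Rel m n (FreeMonoid.ofList (wordU m n)) (FreeMonoid.ofList ((wordU m n).rotate j))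
  | comm (i : Fin m) (j : Fin n) :
      Rel m n (FreeMonoid.of (Gen.t i) * FreeMonoid.of (Gen.u j))
        (FreeMonoid.of (Gen.u j) * FreeMonoid.of (Gen.t i))

/-- The presented monoid `G⁺_{m,n}`. -/
abbrev GP (m n : ℕ) := PresentedMonoid (Rel m n)

/-- The image of a generator in `G⁺_{m,n}`. -/
abbrev gen {m n : ℕ} (g : Gen m n) : GP m n := PresentedMonoid.of (Rel m n) g

/-- The element `Δ = s · t_1 ⋯ t_m · u_1 ⋯ u_n` of `G⁺_{m,n}`. -/
def Delta (m n : ℕ) : GP m n :=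
  PresentedMonoid.mk (Rel m n) (FreeMonoid.ofList (wordFull m n))

/-- The canonical monoid homomorphism from the free monoid to the free group. -/
def iotaFG (α : Type*) : FreeMonoid α →* FreeGroup α := FreeMonoid.lift FreeGroup.of

/-- The group relators associated to a monoid presentation: each relation `w₁ = w₂`
becomes the relator `(ι w₁)⁻¹ · ι w₂`, so that the presented group has the same
presentation as the presented monoid. -/
def grels {α : Type*} (rels : FreeMonoid α → FreeMonoid α → Prop) : Set (FreeGroup α) :=
  {x | ∃ w₁ w₂, rels w₁ w₂ ∧ x = (iotaFG α w₁)⁻¹ * iotaFG α w₂}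

/-- The group `G_{m,n}`, presented by the same generators and relations as `G⁺_{m,n}`. -/
abbrev G (m n : ℕ) := PresentedGroup (grels (Rel m n))

/-! ### Auxiliary lemmas about rotations and products -/

section RotAux

variable {H : Type*} [Group H]

lemma prod_rotate_one (l : List H) (h : ∀ x ∈ l, Commute x l.prod) :
    (l.rotate 1).prod = l.prod := by
  cases l with
  | nil => simp
  | cons a l =>
    have ha : Commute a ((a :: l).prod) := h a List.mem_cons_self
    rw [List.prod_cons] at ha
    have h2 : Commute a l.prod := by
      have h3 := (Commute.refl a).inv_right.mul_right ha
      rwa [inv_mul_cancel_left] at h3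
    rw [List.rotate_cons_succ, List.rotate_zero]
    simp only [List.prod_append, List.prod_cons, List.prod_nil, mul_one]
    exact h2.eq.symm

lemma prod_rotate_comm (l : List H) (h : ∀ x ∈ l, Commute x l.prod) (j : ℕ) :
    (l.rotate j).prod = l.prod := by
  induction j generalizing l with
  | zero => simp
  | succ j ih =>
    have h1 := prod_rotate_one l h
    have e : l.rotate (j + 1) = (l.rotate 1).rotate j := by
      rw [List.rotate_rotate, add_comm]
    rw [e, ih _ (fun x hx => by rw [h1]; exact h x (List.mem_rotate.mp hx)), h1]

lemma commute_of_prod_rotate (l : List H) (h : ∀ j, (l.rotate j).prod = l.prod)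
    {x : H} (hx : x ∈ l) : Commute x l.prod := by
  obtain ⟨s, t, rfl⟩ := List.append_of_mem hx
  have hrot : (s ++ x :: t).rotate s.length = x :: (t ++ s) := by
    rw [List.rotate_eq_drop_append_take (by simp), List.drop_left, List.take_left,
      List.cons_append]
  have h1 := h s.length
  have h2 := h (s.length + 1)
  rw [hrot] at h1
  rw [← List.rotate_rotate, hrot, List.rotate_cons_succ, List.rotate_zero] at h2
  simp only [List.prod_cons, List.prod_append, List.prod_nil, mul_one] at h1 h2 ⊢
  have hc : Commute x (t.prod * s.prod) := h1.trans h2.symm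
  have h4 : Commute x (x * (t.prod * s.prod)) := (Commute.refl x).mul_right hc
  rwa [h1] at h4

end RotAux

lemma commute_mk {A B : Type*} [Monoid A] [Monoid B] {a a' : A} {b b' : B}
    (h1 : Commute a a') (h2 : Commute b b') : Commute ((a, b) : A × B) (a', b') := by
  simp only [Commute, SemiconjBy, Prod.mk_mul_mk, Prod.mk.injEq]
  exact ⟨h1, h2⟩

lemma iota_of {α : Type*} (a : α) : iotaFG α (FreeMonoid.of a) = FreeGroup.of a := rfl

lemma hom_iota {α : Type*} {H : Type*} [Group H] (F : FreeGroup α →* H) (l : List α) :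
    F (iotaFG α (FreeMonoid.ofList l)) = (l.map (fun a => F (FreeGroup.of a))).prod := by
  induction l with
  | nil =>
    show F (iotaFG α 1) = _
    simp
  | cons a l ih =>
    rw [FreeMonoid.ofList_cons, map_mul, map_mul, ih, List.map_cons, List.prod_cons]
    congr 1

/-! ### The target group and the map `φ` -/

variable (m n : ℕ)

abbrev Tgt (m n : ℕ) : Type := Multiplicative ℤ × (FreeGroup (Fin m) × FreeGroup (Fin n))

/-- The product of all generators of a free group. -/
def XX (m : ℕ) : FreeGroup (Fin m) := (List.ofFn (fun i : Fin m => FreeGroup.of i)).prod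

/-- The images of the generators in `ℤ × F_m × F_n`. -/
def fgen : Gen m n → Tgt m n
  | .s => (Multiplicative.ofAdd 1, (XX m)⁻¹, (XX n)⁻¹)
  | .t i => (1, FreeGroup.of i, 1)
  | .u j => (1, 1, FreeGroup.of j)

lemma prod_map_fgen_T :
    ((List.ofFn (fun i : Fin m => Gen.t i)).map (fgen m n)).prod
      = ((1 : Multiplicative ℤ), XX m, (1 : FreeGroup (Fin n))) := by
  have e : (List.ofFn (fun i : Fin m => Gen.t i)).map (fgen m n)
      = (List.ofFn (fun i : Fin m => FreeGroup.of i)).map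
          ((MonoidHom.inr (Multiplicative ℤ) (FreeGroup (Fin m) × FreeGroup (Fin n))).comp
            (MonoidHom.inl (FreeGroup (Fin m)) (FreeGroup (Fin n)))) := by
    rw [List.map_ofFn, List.map_ofFn]
    rfl
  rw [e, ← map_list_prod]
  rfl

lemma prod_map_fgen_U :
    ((List.ofFn (fun j : Fin n => Gen.u j)).map (fgen m n)).prod
      = ((1 : Multiplicative ℤ), (1 : FreeGroup (Fin m)), XX n) := by
  have e : (List.ofFn (fun j : Fin n => Gen.u j)).map (fgen m n)
      = (List.ofFn (fun j : Fin n => FreeGroup.of j)).map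
          ((MonoidHom.inr (Multiplicative ℤ) (FreeGroup (Fin m) × FreeGroup (Fin n))).comp
            (MonoidHom.inr (FreeGroup (Fin m)) (FreeGroup (Fin n)))) := by
    rw [List.map_ofFn, List.map_ofFn]
    rfl
  rw [e, ← map_list_prod]
  rfl

lemma prodT_eq : ((wordT m n).map (fgen m n)).prod
    = (Multiplicative.ofAdd (1 : ℤ), (1 : FreeGroup (Fin m)), (XX n)⁻¹) := by
  rw [wordT, List.map_cons, List.prod_cons, prod_map_fgen_T]
  show ((Multiplicative.ofAdd (1:ℤ), (XX m)⁻¹, (XX n)⁻¹) : Tgt m n) * _ = _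
  simp [Prod.mk_mul_mk]

lemma prodU_eq : ((wordU m n).map (fgen m n)).prod
    = (Multiplicative.ofAdd (1 : ℤ), (XX m)⁻¹, (1 : FreeGroup (Fin n))) := by
  rw [wordU, List.map_cons, List.prod_cons, prod_map_fgen_U]
  show ((Multiplicative.ofAdd (1:ℤ), (XX m)⁻¹, (XX n)⁻¹) : Tgt m n) * _ = _
  simp [Prod.mk_mul_mk]

lemma lift_rel {w₁ w₂ : FreeMonoid (Gen m n)} (h : Rel m n w₁ w₂) :
    FreeGroup.lift (fgen m n) (iotaFG _ w₁) = FreeGroup.lift (fgen m n) (iotaFG _ w₂) := by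
  have hmap : (fun a => FreeGroup.lift (fgen m n) (FreeGroup.of a)) = fgen m n := by
    funext a; simp
  induction h with
  | rotT j =>
    rw [hom_iota, hom_iota, hmap, List.map_rotate]
    refine (prod_rotate_comm _ ?_ j).symm
    intro x hx
    rw [prodT_eq]
    simp only [wordT, List.map_cons, List.mem_cons, List.map_ofFn, List.mem_ofFn,
      Set.mem_range, Function.comp] at hx
    rcases hx with hx | ⟨i, hx⟩
    · subst hx
      show Commute ((fgen m n) Gen.s) _
      exact commute_mk (Commute.all _ _) (commute_mk (Commute.one_right _) (Commute.refl _))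
    · subst hx
      show Commute ((fgen m n) (Gen.t i)) _
      exact commute_mk (Commute.all _ _) (commute_mk (Commute.one_right _) (Commute.one_left _))
  | rotU j =>
    rw [hom_iota, hom_iota, hmap, List.map_rotate]
    refine (prod_rotate_comm _ ?_ j).symm
    intro x hx
    rw [prodU_eq]
    simp only [wordU, List.map_cons, List.mem_cons, List.map_ofFn, List.mem_ofFn,
      Set.mem_range, Function.comp] at hx
    rcases hx with hx | ⟨j', hx⟩
    · subst hx
      show Commute ((fgen m n) Gen.s) _
      exact commute_mk (Commute.all _ _) (commute_mk (Commute.refl _) (Commute.one_right _))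
    · subst hx
      show Commute ((fgen m n) (Gen.u j')) _
      exact commute_mk (Commute.all _ _) (commute_mk (Commute.one_left _) (Commute.one_right _))
  | comm i j =>
    rw [map_mul, map_mul, map_mul, map_mul, iota_of, iota_of]
    simp only [FreeGroup.lift_apply_of]
    show fgen m n (Gen.t i) * fgen m n (Gen.u j) = fgen m n (Gen.u j) * fgen m n (Gen.t i)
    simp [fgen, Prod.mk_mul_mk]

lemma hphi : ∀ r ∈ grels (Rel m n), FreeGroup.lift (fgen m n) r = 1 := by
  rintro r ⟨w₁, w₂, hrel, rfl⟩
  rw [map_mul, map_inv, lift_rel m n hrel, inv_mul_cancel]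

/-- The homomorphism `φ : G_{m,n} → ℤ × F_m × F_n`. -/
def phi : G m n →* Tgt m n := PresentedGroup.toGroup (hphi m n)

/-! ### The group `G_{m,n}` and the map `ψ` -/

/-- Generators inside `G_{m,n}`. -/
def Gof (g : Gen m n) : G m n := PresentedGroup.of g

/-- The quotient map as a homomorphism. -/
def mkG : FreeGroup (Gen m n) →* G m n :=
  QuotientGroup.mk' (Subgroup.normalClosure (grels (Rel m n)))

lemma rel_G {w₁ w₂ : FreeMonoid (Gen m n)} (h : Rel m n w₁ w₂) :
    mkG m n (iotaFG _ w₁) = mkG m n (iotaFG _ w₂) := by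
  have hmem : (iotaFG _ w₁)⁻¹ * iotaFG _ w₂
      ∈ Subgroup.normalClosure (grels (Rel m n)) :=
    Subgroup.subset_normalClosure ⟨w₁, w₂, h, rfl⟩
  show (QuotientGroup.mk _ : G m n) = QuotientGroup.mk _
  exact (QuotientGroup.eq).mpr hmem

lemma mk_iota (l : List (Gen m n)) :
    mkG m n (iotaFG _ (FreeMonoid.ofList l)) = (l.map (Gof m n)).prod := by
  rw [hom_iota]
  rfl

/-- Abbreviations for the key elements of `G_{m,n}`. -/
def SG : G m n := Gof m n Gen.s
def Tprod : G m n := ((List.ofFn (fun i : Fin m => Gen.t i)).map (Gof m n)).prod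
def Uprod : G m n := ((List.ofFn (fun j : Fin n => Gen.u j)).map (Gof m n)).prod
def DeltaG : G m n := ((wordFull m n).map (Gof m n)).prod

lemma prodT_G : ((wordT m n).map (Gof m n)).prod = SG m n * Tprod m n := by
  rw [wordT, List.map_cons, List.prod_cons]; rfl

lemma prodU_G : ((wordU m n).map (Gof m n)).prod = SG m n * Uprod m n := by
  rw [wordU, List.map_cons, List.prod_cons]; rfl

lemma DeltaG_eq : DeltaG m n = (SG m n * Tprod m n) * Uprod m n := by
  rw [DeltaG, wordFull, List.map_cons, List.prod_cons, List.map_append, List.prod_append,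
    mul_assoc]
  rfl

lemma hrotT : ∀ j, (((wordT m n).map (Gof m n)).rotate j).prod
    = ((wordT m n).map (Gof m n)).prod := by
  intro j
  have h := rel_G m n (Rel.rotT j)
  rw [mk_iota, mk_iota, List.map_rotate] at h
  exact h.symm

lemma hrotU : ∀ j, (((wordU m n).map (Gof m n)).rotate j).prod
    = ((wordU m n).map (Gof m n)).prod := by
  intro j
  have h := rel_G m n (Rel.rotU j)
  rw [mk_iota, mk_iota, List.map_rotate] at h
  exact h.symm

lemma cS_DT : Commute (SG m n) (SG m n * Tprod m n) := by
  rw [← prodT_G]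
  exact commute_of_prod_rotate _ (hrotT m n)
    (List.mem_map_of_mem List.mem_cons_self)

lemma cT_DT (i : Fin m) : Commute (Gof m n (Gen.t i)) (SG m n * Tprod m n) := by
  rw [← prodT_G]
  refine commute_of_prod_rotate _ (hrotT m n) (List.mem_map_of_mem ?_)
  exact List.mem_cons_of_mem _ (List.mem_ofFn.mpr ⟨i, rfl⟩)

lemma cS_DU : Commute (SG m n) (SG m n * Uprod m n) := by
  rw [← prodU_G]
  exact commute_of_prod_rotate _ (hrotU m n)
    (List.mem_map_of_mem List.mem_cons_self)

lemma cU_DU (j : Fin n) : Commute (Gof m n (Gen.u j)) (SG m n * Uprod m n) := by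
  rw [← prodU_G]
  refine commute_of_prod_rotate _ (hrotU m n) (List.mem_map_of_mem ?_)
  exact List.mem_cons_of_mem _ (List.mem_ofFn.mpr ⟨j, rfl⟩)

lemma ctu (i : Fin m) (j : Fin n) :
    Commute (Gof m n (Gen.t i)) (Gof m n (Gen.u j)) := by
  have h := rel_G m n (Rel.comm i j)
  rw [map_mul, map_mul, iota_of, iota_of, map_mul, map_mul, iota_of, iota_of] at h
  exact h

lemma cT_U (i : Fin m) : Commute (Gof m n (Gen.t i)) (Uprod m n) := by
  refine Commute.list_prod_right _ _ ?_
  intro y hy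
  simp only [List.map_ofFn, List.mem_ofFn, Set.mem_range, Function.comp] at hy
  obtain ⟨j, rfl⟩ := hy
  exact ctu m n i j

lemma cU_T (j : Fin n) : Commute (Gof m n (Gen.u j)) (Tprod m n) := by
  refine Commute.list_prod_right _ _ ?_
  intro y hy
  simp only [List.map_ofFn, List.mem_ofFn, Set.mem_range, Function.comp] at hy
  obtain ⟨i, rfl⟩ := hy
  exact (ctu m n i j).symm

lemma cTU : Commute (Tprod m n) (Uprod m n) := by
  refine Commute.list_prod_left _ _ ?_
  intro x hx
  simp only [List.map_ofFn, List.mem_ofFn, Set.mem_range, Function.comp] at hx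
  obtain ⟨i, rfl⟩ := hx
  exact cT_U m n i

lemma DeltaG_eq' : DeltaG m n = (SG m n * Uprod m n) * Tprod m n := by
  rw [DeltaG_eq, mul_assoc, mul_assoc, (cTU m n).eq]

lemma cT_Delta (i : Fin m) : Commute (Gof m n (Gen.t i)) (DeltaG m n) := by
  rw [DeltaG_eq]
  exact (cT_DT m n i).mul_right (cT_U m n i)

lemma cU_Delta (j : Fin n) : Commute (Gof m n (Gen.u j)) (DeltaG m n) := by
  rw [DeltaG_eq']
  exact (cU_DU m n j).mul_right (cU_T m n j)

lemma cS_Delta : Commute (SG m n) (DeltaG m n) := by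
  have e : DeltaG m n = (SG m n * Tprod m n) * ((SG m n)⁻¹ * (SG m n * Uprod m n)) := by
    rw [inv_mul_cancel_left, DeltaG_eq]
  rw [e]
  exact (cS_DT m n).mul_right (((Commute.refl _).inv_right).mul_right (cS_DU m n))

lemma center_Delta (x : G m n) : Commute (DeltaG m n) x := by
  have htop : Subgroup.centralizer {DeltaG m n} = ⊤ := by
    rw [eq_top_iff, ← PresentedGroup.closure_range_of (grels (Rel m n))]
    refine (Subgroup.closure_le _).mpr ?_
    rintro _ ⟨g, rfl⟩
    rw [SetLike.mem_coe, Subgroup.mem_centralizer_iff]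
    rintro y hy
    rw [Set.mem_singleton_iff] at hy
    subst hy
    cases g with
    | s => exact (cS_Delta m n).symm.eq
    | t i => exact (cT_Delta m n i).symm.eq
    | u j => exact (cU_Delta m n j).symm.eq
  have hx : x ∈ Subgroup.centralizer {DeltaG m n} := by
    rw [htop]; trivial
  exact (Subgroup.mem_centralizer_iff.mp hx _ (Set.mem_singleton _))

/-- The three component homomorphisms of `ψ`. -/
def psi2 : FreeGroup (Fin m) →* G m n := FreeGroup.lift (fun i => Gof m n (Gen.t i))
def psi3 : FreeGroup (Fin n) →* G m n := FreeGroup.lift (fun j => Gof m n (Gen.u j))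

lemma hc23 : ∀ a b, Commute (psi2 m n a) (psi3 m n b) := by
  have step1 : ∀ (i : Fin m) (b : FreeGroup (Fin n)),
      Commute (Gof m n (Gen.t i)) (psi3 m n b) := by
    intro i b
    induction b using FreeGroup.induction_on with
    | C1 => exact (map_one (psi3 m n)) ▸ Commute.one_right _
    | of j =>
      have : psi3 m n (FreeGroup.of j) = Gof m n (Gen.u j) := FreeGroup.lift_apply_of
      rw [this]
      exact ctu m n i j
    | inv_of j hj => rw [map_inv]; exact hj.inv_right
    | mul x y hx hy => rw [map_mul]; exact hx.mul_right hy
  intro a b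
  induction a using FreeGroup.induction_on with
  | C1 => rw [map_one]; exact Commute.one_left _
  | of i =>
    have : psi2 m n (FreeGroup.of i) = Gof m n (Gen.t i) := FreeGroup.lift_apply_of
    rw [this]
    exact step1 i b
  | inv_of i hi => rw [map_inv]; exact hi.inv_left
  | mul x y hx hy => rw [map_mul]; exact hx.mul_left hy

def psi23 : FreeGroup (Fin m) × FreeGroup (Fin n) →* G m n :=
  (psi2 m n).noncommCoprod (psi3 m n) (hc23 m n)

def psi1 : Multiplicative ℤ →* G m n := zpowersHom (G m n) (DeltaG m n)

/-- The homomorphism `ψ : ℤ × F_m × F_n → G_{m,n}`. -/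
def psi : Tgt m n →* G m n :=
  (psi1 m n).noncommCoprod (psi23 m n)
    (fun a x => by
      rw [psi1, zpowersHom_apply]
      exact (center_Delta m n (psi23 m n x)).zpow_left _)

lemma psi2_X : psi2 m n (XX m) = Tprod m n := by
  rw [XX, map_list_prod, Tprod, List.map_ofFn, List.map_ofFn]
  have e : (⇑(psi2 m n) ∘ fun i : Fin m => FreeGroup.of i)
      = (Gof m n ∘ fun i : Fin m => Gen.t i) := by
    funext i
    exact FreeGroup.lift_apply_of
  rw [e]

lemma psi3_Y : psi3 m n (XX n) = Uprod m n := by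
  rw [XX, map_list_prod, Uprod, List.map_ofFn, List.map_ofFn]
  have e : (⇑(psi3 m n) ∘ fun j : Fin n => FreeGroup.of j)
      = (Gof m n ∘ fun j : Fin n => Gen.u j) := by
    funext j
    exact FreeGroup.lift_apply_of
  rw [e]

lemma psi_apply (a : Multiplicative ℤ) (b : FreeGroup (Fin m)) (c : FreeGroup (Fin n)) :
    psi m n (a, b, c) = psi1 m n a * (psi2 m n b * psi3 m n c) := by
  rw [psi, MonoidHom.noncommCoprod_apply, psi23, MonoidHom.noncommCoprod_apply]

/-! ### The two compositions are the identity -/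

lemma phi_of (g : Gen m n) : phi m n (Gof m n g) = fgen m n g :=
  PresentedGroup.toGroup.of (hphi m n)

lemma hA : (psi m n).comp (phi m n) = MonoidHom.id (G m n) := by
  refine PresentedGroup.ext fun g => ?_
  rw [MonoidHom.comp_apply, MonoidHom.id_apply]
  have : phi m n (PresentedGroup.of g) = fgen m n g := phi_of m n g
  rw [this]
  cases g with
  | s =>
    show psi m n (Multiplicative.ofAdd 1, (XX m)⁻¹, (XX n)⁻¹) = Gof m n Gen.s
    rw [psi_apply, map_inv, map_inv, psi2_X, psi3_Y]
    rw [psi1, zpowersHom_apply]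
    show DeltaG m n ^ (1 : ℤ) * _ = _
    rw [zpow_one, DeltaG_eq']
    show (SG m n * Uprod m n * Tprod m n) * ((Tprod m n)⁻¹ * (Uprod m n)⁻¹) = SG m n
    simp [mul_assoc, SG, Gof]
  | t i =>
    show psi m n (1, FreeGroup.of i, 1) = Gof m n (Gen.t i)
    rw [psi_apply, map_one, map_one, one_mul, mul_one, psi2, FreeGroup.lift_apply_of]
  | u j =>
    show psi m n (1, 1, FreeGroup.of j) = Gof m n (Gen.u j)
    rw [psi_apply, map_one, map_one, one_mul, one_mul, psi3, FreeGroup.lift_apply_of]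

lemma phi_Delta : phi m n (DeltaG m n) = (Multiplicative.ofAdd (1 : ℤ), 1, 1) := by
  rw [DeltaG, map_list_prod, List.map_map]
  have e : (⇑(phi m n) ∘ Gof m n) = fgen m n := by
    funext g
    exact phi_of m n g
  rw [e, wordFull, List.map_cons, List.prod_cons, List.map_append, List.prod_append,
    prod_map_fgen_T, prod_map_fgen_U]
  show ((Multiplicative.ofAdd (1:ℤ), (XX m)⁻¹, (XX n)⁻¹) : Tgt m n) * _ = _
  simp [Prod.mk_mul_mk]

lemma hB : (phi m n).comp (psi m n) = MonoidHom.id (Tgt m n) := by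
  have e1 : ∀ a : Multiplicative ℤ, phi m n (psi m n (a, 1, 1)) = (a, 1, 1) := by
    have h : ((phi m n).comp (psi m n)).comp
        (MonoidHom.inl (Multiplicative ℤ) (FreeGroup (Fin m) × FreeGroup (Fin n)))
        = MonoidHom.inl (Multiplicative ℤ) (FreeGroup (Fin m) × FreeGroup (Fin n)) := by
      refine MonoidHom.ext_mint ?_
      show phi m n (psi m n (Multiplicative.ofAdd 1, 1, 1)) = _
      rw [psi_apply, map_one (psi2 m n), map_one (psi3 m n), one_mul, mul_one, psi1,
        zpowersHom_apply]
      show phi m n (DeltaG m n ^ (1:ℤ)) = _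
      rw [zpow_one, phi_Delta]
      rfl
    intro a
    exact DFunLike.congr_fun h a
  have e2 : ∀ b : FreeGroup (Fin m), phi m n (psi m n (1, b, 1)) = (1, b, 1) := by
    have h : ((phi m n).comp (psi m n)).comp
        ((MonoidHom.inr (Multiplicative ℤ) (FreeGroup (Fin m) × FreeGroup (Fin n))).comp
          (MonoidHom.inl (FreeGroup (Fin m)) (FreeGroup (Fin n))))
        = (MonoidHom.inr (Multiplicative ℤ) (FreeGroup (Fin m) × FreeGroup (Fin n))).comp
          (MonoidHom.inl (FreeGroup (Fin m)) (FreeGroup (Fin n))) := by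
      refine FreeGroup.ext_hom _ _ fun i => ?_
      show phi m n (psi m n (1, FreeGroup.of i, 1)) = _
      rw [psi_apply, map_one, map_one, one_mul, mul_one, psi2, FreeGroup.lift_apply_of, phi_of]
      rfl
    intro b
    exact DFunLike.congr_fun h b
  have e3 : ∀ c : FreeGroup (Fin n), phi m n (psi m n (1, 1, c)) = (1, 1, c) := by
    have h : ((phi m n).comp (psi m n)).comp
        ((MonoidHom.inr (Multiplicative ℤ) (FreeGroup (Fin m) × FreeGroup (Fin n))).comp
          (MonoidHom.inr (FreeGroup (Fin m)) (FreeGroup (Fin n))))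
        = (MonoidHom.inr (Multiplicative ℤ) (FreeGroup (Fin m) × FreeGroup (Fin n))).comp
          (MonoidHom.inr (FreeGroup (Fin m)) (FreeGroup (Fin n))) := by
      refine FreeGroup.ext_hom _ _ fun j => ?_
      show phi m n (psi m n (1, 1, FreeGroup.of j)) = _
      rw [psi_apply, map_one, map_one, one_mul, one_mul, psi3, FreeGroup.lift_apply_of, phi_of]
      rfl
    intro c
    exact DFunLike.congr_fun h c
  refine MonoidHom.ext fun p => ?_
  obtain ⟨a, b, c⟩ := p
  have hp : ((a, b, c) : Tgt m n) = ((a, 1, 1) : Tgt m n) * ((1, b, 1) * (1, 1, c)) := by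
    simp [Prod.mk_mul_mk]
  rw [MonoidHom.comp_apply, MonoidHom.id_apply, hp, map_mul, map_mul, map_mul, map_mul,
    e1, e2, e3]

/-- For `m, n ≥ 1`, the group `G_{m,n}` is isomorphic to `ℤ × F_m × F_n`, where `F_m`, `F_n`
are free groups of ranks `m` and `n`. -/
theorem G_iso_int_prod_free (m n : ℕ) (hm : 1 ≤ m) (hn : 1 ≤ n) :
    Nonempty (G m n ≃* (Multiplicative ℤ × (FreeGroup (Fin m) × FreeGroup (Fin n)))) :=
  ⟨MonoidHom.toMulEquiv (phi m n) (psi m n) (hA m n) (hB m n)⟩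

end Gmn
end

section
/- For integers m, n ≥ 1, in the monoid G⁺_{m,n} presented by generators s, t_1, …, t_m, u_1, …, u_n subject to all cyclic rotations of s·t_1⋯t_m being equal, all cyclic rotations of s·u_1⋯u_n being equal, and t_i·u_j = u_j·t_i for all i, j, all cyclic rotations of the word s·t_1⋯t_m·u_1⋯u_n are equal to one another (the cyclic relations [s, t_1, …, t_m, u_1, …, u_n] hold). -/
namespace Gmn
/-! ### Auxiliary machinery -/

/-- The image of a word in the presented monoid. -/
def e (m n : ℕ) (l : List (Gen m n)) : GP m n :=
  PresentedMonoid.mk (Rel m n) (FreeMonoid.ofList l)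

@[simp] lemma e_nil (m n : ℕ) : e m n [] = 1 := rfl

@[simp] lemma e_cons (m n : ℕ) (x : Gen m n) (l : List (Gen m n)) :
    e m n (x :: l) = gen x * e m n l := rfl

@[simp] lemma e_append (m n : ℕ) (l₁ l₂ : List (Gen m n)) :
    e m n (l₁ ++ l₂) = e m n l₁ * e m n l₂ := rfl

lemma sound {m n : ℕ} {a b : FreeMonoid (Gen m n)} (h : Rel m n a b) :
    PresentedMonoid.mk (Rel m n) a = PresentedMonoid.mk (Rel m n) b :=
  Quotient.sound (ConGen.Rel.of _ _ h)

lemma rot_helper {α : Type*} (x : α) (P X : List α) :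
    (x :: (P ++ X)).rotate (P.length + 1) = X ++ x :: P := by
  rw [List.rotate_eq_drop_append_take (by simp)]
  simp [List.take_left, List.drop_left]

lemma rotT' {m n : ℕ} (P Q : List (Gen m n))
    (h : P ++ Q = List.ofFn (fun i => Gen.t i)) :
    e m n (Gen.s :: (P ++ Q)) = e m n (Q ++ Gen.s :: P) := by
  have h1 := sound (Rel.rotT (m := m) (n := n) (P.length + 1))
  rw [show wordT m n = Gen.s :: (P ++ Q) by rw [wordT, h], rot_helper] at h1
  exact h1

lemma rotU' {m n : ℕ} (P Q : List (Gen m n))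
    (h : P ++ Q = List.ofFn (fun j => Gen.u j)) :
    e m n (Gen.s :: (P ++ Q)) = e m n (Q ++ Gen.s :: P) := by
  have h1 := sound (Rel.rotU (m := m) (n := n) (P.length + 1))
  rw [show wordU m n = Gen.s :: (P ++ Q) by rw [wordU, h], rot_helper] at h1
  exact h1

lemma comm_one {m n : ℕ} (j : Fin n) (P : List (Gen m n))
    (hP : ∀ x ∈ P, ∃ i, x = Gen.t i) :
    e m n (P ++ [Gen.u j]) = e m n (Gen.u j :: P) := by
  induction P with
  | nil => rfl
  | cons x P ih =>
    obtain ⟨i, rfl⟩ := hP x List.mem_cons_self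
    have hc : gen (Gen.t i) * gen (Gen.u j) = gen (Gen.u j) * gen (Gen.t i) :=
      sound (Rel.comm i j)
    have ih' := ih (fun y hy => hP y (List.mem_cons_of_mem _ hy))
    calc e m n ((Gen.t i :: P) ++ [Gen.u j])
        = gen (Gen.t i) * e m n (P ++ [Gen.u j]) := rfl
      _ = gen (Gen.t i) * e m n (Gen.u j :: P) := by rw [ih']
      _ = gen (Gen.t i) * (gen (Gen.u j) * e m n P) := rfl
      _ = (gen (Gen.t i) * gen (Gen.u j)) * e m n P := by rw [mul_assoc]
      _ = (gen (Gen.u j) * gen (Gen.t i)) * e m n P := by rw [hc]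
      _ = e m n (Gen.u j :: Gen.t i :: P) := by rw [mul_assoc]; rfl

lemma comm_list {m n : ℕ} (P A : List (Gen m n))
    (hP : ∀ x ∈ P, ∃ i, x = Gen.t i) (hA : ∀ y ∈ A, ∃ j, y = Gen.u j) :
    e m n (P ++ A) = e m n (A ++ P) := by
  induction A with
  | nil => simp
  | cons y A ih =>
    obtain ⟨jj, rfl⟩ := hA y List.mem_cons_self
    have ih' := ih (fun z hz => hA z (List.mem_cons_of_mem _ hz))
    calc e m n (P ++ Gen.u jj :: A)
        = e m n ((P ++ [Gen.u jj]) ++ A) := by rw [List.append_cons]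
      _ = e m n (P ++ [Gen.u jj]) * e m n A := rfl
      _ = e m n (Gen.u jj :: P) * e m n A := by rw [comm_one jj P hP]
      _ = gen (Gen.u jj) * (e m n P * e m n A) := by
          rw [e_cons, mul_assoc]
      _ = gen (Gen.u jj) * e m n (P ++ A) := rfl
      _ = gen (Gen.u jj) * e m n (A ++ P) := by rw [ih']
      _ = e m n ((Gen.u jj :: A) ++ P) := rfl

lemma key1 {M : Type*} [Monoid M] (S p q u : M)
    (h1 : S * (p * q) = q * (S * p)) (h2 : S * u = u * S) (h3 : p * u = u * p) :
    S * (p * (q * u)) = q * (u * (S * p)) := by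
  calc S * (p * (q * u))
      = (S * (p * q)) * u := by rw [mul_assoc, mul_assoc]
    _ = (q * (S * p)) * u := by rw [h1]
    _ = q * (S * (p * u)) := by rw [mul_assoc, mul_assoc]
    _ = q * (S * (u * p)) := by rw [h3]
    _ = q * ((S * u) * p) := by rw [mul_assoc]
    _ = q * ((u * S) * p) := by rw [h2]
    _ = q * (u * (S * p)) := by rw [mul_assoc]

lemma key2 {M : Type*} [Monoid M] (S T a b : M)
    (hT : S * T = T * S) (hU : S * (a * b) = b * (S * a)) (hC : T * b = b * T) :
    S * (T * (a * b)) = b * (S * (T * a)) := by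
  calc S * (T * (a * b))
      = (S * T) * (a * b) := by rw [mul_assoc]
    _ = (T * S) * (a * b) := by rw [hT]
    _ = T * (S * (a * b)) := by rw [mul_assoc]
    _ = T * (b * (S * a)) := by rw [hU]
    _ = (T * b) * (S * a) := by rw [mul_assoc]
    _ = (b * T) * (S * a) := by rw [hC]
    _ = b * (T * (S * a)) := by rw [mul_assoc]
    _ = b * ((T * S) * a) := by rw [mul_assoc]
    _ = b * ((S * T) * a) := by rw [hT]
    _ = b * (S * (T * a)) := by rw [mul_assoc]

lemma memT {m n : ℕ} : ∀ x ∈ List.ofFn (fun i => (Gen.t i : Gen m n)), ∃ i, x = Gen.t i := by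
  intro x hx
  obtain ⟨i, hi⟩ := List.mem_ofFn.1 hx
  exact ⟨i, hi.symm⟩

lemma memU {m n : ℕ} : ∀ y ∈ List.ofFn (fun j => (Gen.u j : Gen m n)), ∃ j, y = Gen.u j := by
  intro y hy
  obtain ⟨j, hj⟩ := List.mem_ofFn.1 hy
  exact ⟨j, hj.symm⟩

lemma aux (m n : ℕ) : ∀ k : ℕ, k < m + n + 1 →
    e m n (wordFull m n) = e m n ((wordFull m n).rotate k) := by
  intro k hk
  match k with
  | 0 => simp
  | (k + 1) =>
    by_cases hkm : k < m
    · -- rotation point inside the t-block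
      set TL : List (Gen m n) := List.ofFn (fun i => Gen.t i) with hTLdef
      set UL : List (Gen m n) := List.ofFn (fun j => Gen.u j) with hULdef
      set P := TL.take k with hPdef
      set Q := TL.drop k with hQdef
      have hPQ : P ++ Q = TL := List.take_append_drop k TL
      have hPlen : P.length = k := by
        simp [hPdef, hTLdef]
        omega
      have hw : wordFull m n = Gen.s :: (P ++ (Q ++ UL)) := by
        rw [wordFull, ← hTLdef, ← hULdef, ← hPQ, List.append_assoc]
      rw [hw, show k + 1 = P.length + 1 by rw [hPlen], rot_helper]
      have hTLmem : ∀ x ∈ TL, ∃ i, x = Gen.t i := by rw [hTLdef]; exact memT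
      have hULmem : ∀ y ∈ UL, ∃ j, y = Gen.u j := by rw [hULdef]; exact memU
      have hP : ∀ x ∈ P, ∃ i, x = Gen.t i :=
        fun x hx => hTLmem x (hPQ ▸ List.mem_append_left Q hx)
      have h1 := rotT' P Q hPQ
      have h2 := rotU' [] UL rfl
      have h3 := comm_list P UL hP hULmem
      simp only [e_cons, e_append, e_nil, mul_one, one_mul, List.nil_append,
        mul_assoc] at h1 h2 h3 ⊢
      exact key1 _ _ _ _ h1 h2 h3
    · -- rotation point inside the u-block
      set TL : List (Gen m n) := List.ofFn (fun i => Gen.t i) with hTLdef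
      set UL : List (Gen m n) := List.ofFn (fun j => Gen.u j) with hULdef
      set A := UL.take (k - m) with hAdef
      set B := UL.drop (k - m) with hBdef
      have hAB : A ++ B = UL := List.take_append_drop _ UL
      have hAlen : A.length = k - m := by
        simp [hAdef, hULdef]
        omega
      have hlen : (TL ++ A).length + 1 = k + 1 := by
        simp [hTLdef, hAlen]
        omega
      have hw : wordFull m n = Gen.s :: ((TL ++ A) ++ B) := by
        rw [wordFull, ← hTLdef, ← hULdef, ← hAB, List.append_assoc]
      rw [hw, ← hlen, rot_helper]
      have hTLmem : ∀ x ∈ TL, ∃ i, x = Gen.t i := by rw [hTLdef]; exact memT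
      have hULmem : ∀ y ∈ UL, ∃ j, y = Gen.u j := by rw [hULdef]; exact memU
      have hB : ∀ y ∈ B, ∃ j, y = Gen.u j :=
        fun y hy => hULmem y (hAB ▸ List.mem_append_right A hy)
      have hT := rotT' [] TL rfl
      have hU := rotU' A B hAB
      have hC := comm_list TL B hTLmem hB
      simp only [e_cons, e_append, e_nil, mul_one, one_mul, List.nil_append,
        mul_assoc] at hT hU hC ⊢
      exact key2 _ _ _ _ hT hU hC

/-- For `m, n ≥ 1`, in the monoid `G⁺_{m,n}` all cyclic rotations of the word
`s · t_1 ⋯ t_m · u_1 ⋯ u_n` are equal to one another: the cyclic relations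
`[s, t_1, …, t_m, u_1, …, u_n]` hold. -/
theorem cyclic_relations_full (m n : ℕ) (hm : 1 ≤ m) (hn : 1 ≤ n) : ∀ j : ℕ,
    PresentedMonoid.mk (Rel m n) (FreeMonoid.ofList (wordFull m n)) =
    PresentedMonoid.mk (Rel m n) (FreeMonoid.ofList ((wordFull m n).rotate j)) := by
  intro j
  have hlen : (wordFull m n).length = m + n + 1 := by simp [wordFull]
  rw [← List.rotate_mod]
  exact aux m n (j % (wordFull m n).length)
    (by rw [hlen]; exact Nat.mod_lt _ (by omega))

end Gmn
end

section
/- For integers m, n ≥ 1, the element Δ := s·t_1⋯t_m·u_1⋯u_n of the monoid G⁺_{m,n} is a fundamental element: there is a permutation σ of the generating set {s, t_1, …, t_m, u_1, …, u_n} such that for every generator g there exists Δ_g ∈ G⁺_{m,n} with Δ = g·Δ_g = Δ_g·σ(g). -/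
namespace Gmn
section Aux

variable {m n : ℕ}

/-- `mk` of a word given as a list. -/
def M (m n : ℕ) (L : List (Gen m n)) : GP m n :=
  PresentedMonoid.mk (Rel m n) (FreeMonoid.ofList L)

lemma M_append (a b : List (Gen m n)) : M m n (a ++ b) = M m n a * M m n b := by
  unfold M; rw [FreeMonoid.ofList_append, map_mul]

lemma M_cons (a : Gen m n) (L : List (Gen m n)) : M m n (a :: L) = gen a * M m n L := rfl

lemma M_singleton (a : Gen m n) : M m n [a] = gen a := rfl

lemma rel_eq {a b : FreeMonoid (Gen m n)} (h : Rel m n a b) :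
    PresentedMonoid.mk (Rel m n) a = PresentedMonoid.mk (Rel m n) b :=
  Quotient.sound (ConGen.Rel.of a b h)

/-- The list of `t`-generators. -/
def tl (m n : ℕ) : List (Gen m n) := List.ofFn (fun i => Gen.t i)

/-- The list of `u`-generators. -/
def ul (m n : ℕ) : List (Gen m n) := List.ofFn (fun j => Gen.u j)

lemma wordT_eq : wordT m n = Gen.s :: tl m n := rfl
lemma wordU_eq : wordU m n = Gen.s :: ul m n := rfl
lemma wordFull_eq : wordFull m n = Gen.s :: (tl m n ++ ul m n) := rfl

lemma tl_length : (tl m n).length = m := List.length_ofFn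
lemma ul_length : (ul m n).length = n := List.length_ofFn

lemma rotT_eq (j : ℕ) : M m n (wordT m n) = M m n ((wordT m n).rotate j) :=
  rel_eq (Rel.rotT j)

lemma rotU_eq (j : ℕ) : M m n (wordU m n) = M m n ((wordU m n).rotate j) :=
  rel_eq (Rel.rotU j)

lemma comm_gen (i : Fin m) (j : Fin n) :
    gen (Gen.t i) * gen (Gen.u j) = gen (Gen.u j) * gen (Gen.t i) := by
  have h := rel_eq (Rel.comm i j)
  rw [map_mul, map_mul] at h
  exact h

lemma comm_t_list (i : Fin m) (L : List (Fin n)) :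
    gen (Gen.t i) * M m n (L.map Gen.u) = M m n (L.map Gen.u) * gen (Gen.t i) := by
  induction L with
  | nil => simp [M, FreeMonoid.ofList_nil]
  | cons a L ih =>
      rw [List.map_cons, M_cons, ← mul_assoc, comm_gen, mul_assoc, ih, ← mul_assoc]

lemma comm_u_list (j : Fin n) (L : List (Fin m)) :
    gen (Gen.u j) * M m n (L.map Gen.t) = M m n (L.map Gen.t) * gen (Gen.u j) := by
  induction L with
  | nil => simp [M, FreeMonoid.ofList_nil]
  | cons a L ih =>
      rw [List.map_cons, M_cons, ← mul_assoc, ← comm_gen, mul_assoc, ih, ← mul_assoc]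

lemma comm_t_B (i : Fin m) :
    gen (Gen.t i) * M m n (ul m n) = M m n (ul m n) * gen (Gen.t i) := by
  have : ul m n = (List.finRange n).map Gen.u := List.ofFn_eq_map
  rw [this]; exact comm_t_list i _

lemma comm_u_A (j : Fin n) :
    gen (Gen.u j) * M m n (tl m n) = M m n (tl m n) * gen (Gen.u j) := by
  have : tl m n = (List.finRange m).map Gen.t := List.ofFn_eq_map
  rw [this]; exact comm_u_list j _

lemma comm_A_B : M m n (tl m n) * M m n (ul m n) = M m n (ul m n) * M m n (tl m n) := by
  have h : ∀ L : List (Fin m),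
      M m n (L.map Gen.t) * M m n (ul m n) = M m n (ul m n) * M m n (L.map Gen.t) := by
    intro L
    induction L with
    | nil => simp [M, FreeMonoid.ofList_nil]
    | cons a L ih =>
        rw [List.map_cons, M_cons, mul_assoc, ih, ← mul_assoc, comm_t_B, mul_assoc]
  have : tl m n = (List.finRange m).map Gen.t := List.ofFn_eq_map
  rw [this]; exact h _

lemma delta_eq : Delta m n = gen Gen.s * (M m n (tl m n) * M m n (ul m n)) := by
  show M m n (wordFull m n) = _
  rw [wordFull_eq, M_cons, M_append]

/-- `s·T = T·s`. -/
lemma sA_eq : gen Gen.s * M m n (tl m n) = M m n (tl m n) * gen Gen.s := by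
  have h := rotT_eq (m := m) (n := n) 1
  rw [wordT_eq, List.rotate_cons_succ, List.rotate_zero, M_append, M_singleton, M_cons] at h
  exact h

/-- `s·U = U·s`. -/
lemma sB_eq : gen Gen.s * M m n (ul m n) = M m n (ul m n) * gen Gen.s := by
  have h := rotU_eq (m := m) (n := n) 1
  rw [wordU_eq, List.rotate_cons_succ, List.rotate_zero, M_append, M_singleton, M_cons] at h
  exact h

/-- Rotation of `s·T` by `k+1` steps, for `k ≤ m`. -/
lemma rotT_drop_take (k : ℕ) (hk : k ≤ m) :
    M m n (wordT m n) =
      M m n ((tl m n).drop k) * (gen Gen.s * M m n ((tl m n).take k)) := by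
  have h := rotT_eq (m := m) (n := n) (k + 1)
  rw [List.rotate_eq_drop_append_take (by simp [wordT_eq, tl_length]; omega)] at h
  rw [wordT_eq] at h
  rw [List.drop_succ_cons, List.take_succ_cons] at h
  rw [M_append, M_cons, M_cons] at h
  rw [wordT_eq, M_cons]
  exact h

lemma rotU_drop_take (k : ℕ) (hk : k ≤ n) :
    M m n (wordU m n) =
      M m n ((ul m n).drop k) * (gen Gen.s * M m n ((ul m n).take k)) := by
  have h := rotU_eq (m := m) (n := n) (k + 1)
  rw [List.rotate_eq_drop_append_take (by simp [wordU_eq, ul_length]; omega)] at h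
  rw [wordU_eq] at h
  rw [List.drop_succ_cons, List.take_succ_cons] at h
  rw [M_append, M_cons, M_cons] at h
  rw [wordU_eq, M_cons]
  exact h

lemma tl_drop (i : Fin m) :
    (tl m n).drop i.1 = Gen.t i :: (tl m n).drop (i.1 + 1) := by
  rw [List.drop_eq_getElem_cons (by rw [tl_length]; exact i.2)]
  congr 1
  show (List.ofFn _)[i.1]'(by simp) = _
  rw [List.getElem_ofFn]

lemma tl_take_succ (i : Fin m) :
    (tl m n).take (i.1 + 1) = (tl m n).take i.1 ++ [Gen.t i] := by
  rw [List.take_succ]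
  congr 1
  rw [List.getElem?_eq_getElem (by rw [tl_length]; exact i.2)]
  show Option.toList (some ((List.ofFn _)[i.1]'(by simp))) = _
  rw [List.getElem_ofFn]
  rfl

lemma ul_drop (j : Fin n) :
    (ul m n).drop j.1 = Gen.u j :: (ul m n).drop (j.1 + 1) := by
  rw [List.drop_eq_getElem_cons (by rw [ul_length]; exact j.2)]
  congr 1
  show (List.ofFn _)[j.1]'(by simp) = _
  rw [List.getElem_ofFn]

lemma ul_take_succ (j : Fin n) :
    (ul m n).take (j.1 + 1) = (ul m n).take j.1 ++ [Gen.u j] := by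
  rw [List.take_succ]
  congr 1
  rw [List.getElem?_eq_getElem (by rw [ul_length]; exact j.2)]
  show Option.toList (some ((List.ofFn _)[j.1]'(by simp))) = _
  rw [List.getElem_ofFn]
  rfl

end Aux

/-- For `m, n ≥ 1`, the element `Δ = s · t_1 ⋯ t_m · u_1 ⋯ u_n` of `G⁺_{m,n}` is a
fundamental element: there is a permutation `σ` of the generating set such that for every
generator `g` there exists `Δ_g` with `Δ = g·Δ_g = Δ_g·σ(g)`. -/
theorem delta_fundamental (m n : ℕ) (hm : 1 ≤ m) (hn : 1 ≤ n) :
    ∃ σ : Equiv.Perm (Gen m n), ∀ g : Gen m n,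
      ∃ Δg : GP m n, Delta m n = gen g * Δg ∧ Delta m n = Δg * gen (σ g) := by
  refine ⟨Equiv.refl _, fun g => ?_⟩
  have hST : M m n (wordT m n) = gen Gen.s * M m n (tl m n) := by rw [wordT_eq, M_cons]
  have hSU : M m n (wordU m n) = gen Gen.s * M m n (ul m n) := by rw [wordU_eq, M_cons]
  cases g with
  | s =>
      refine ⟨M m n (tl m n) * M m n (ul m n), delta_eq, ?_⟩
      show Delta m n = _ * gen Gen.s
      rw [delta_eq, mul_assoc (M m n (tl m n)), ← sB_eq, ← mul_assoc (M m n (tl m n)),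
        ← sA_eq, mul_assoc]
  | t i =>
      -- Δ_g = t_{i+1}⋯t_m · s · t_1⋯t_{i-1} · U
      refine ⟨M m n ((tl m n).drop (i.1 + 1)) *
        (gen Gen.s * (M m n ((tl m n).take i.1) * M m n (ul m n))), ?_, ?_⟩
      · -- Δ = t_i · Δ_g
        have h1 := rotT_drop_take (m := m) (n := n) i.1 (le_of_lt i.2)
        rw [tl_drop i, M_cons] at h1
        rw [delta_eq, ← mul_assoc, ← hST, h1]
        simp only [mul_assoc]
      · -- Δ = Δ_g · t_i
        show Delta m n = _ * gen (Gen.t i)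
        have h2 := rotT_drop_take (m := m) (n := n) (i.1 + 1) i.2
        rw [tl_take_succ i, M_append, M_singleton] at h2
        rw [delta_eq, ← mul_assoc, ← hST, h2]
        simp only [mul_assoc]
        rw [comm_t_B]
  | u j =>
      -- Δ_g = u_{j+1}⋯u_n · s · u_1⋯u_{j-1} · T, using Δ = s·U·T
      have hΔ : Delta m n = gen Gen.s * (M m n (ul m n) * M m n (tl m n)) := by
        rw [delta_eq, comm_A_B]
      refine ⟨M m n ((ul m n).drop (j.1 + 1)) *
        (gen Gen.s * (M m n ((ul m n).take j.1) * M m n (tl m n))), ?_, ?_⟩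
      · have h1 := rotU_drop_take (m := m) (n := n) j.1 (le_of_lt j.2)
        rw [ul_drop j, M_cons] at h1
        rw [hΔ, ← mul_assoc, ← hSU, h1]
        simp only [mul_assoc]
      · show Delta m n = _ * gen (Gen.u j)
        have h2 := rotU_drop_take (m := m) (n := n) (j.1 + 1) j.2
        rw [ul_take_succ j, M_append, M_singleton] at h2
        rw [hΔ, ← mul_assoc, ← hSU, h2]
        simp only [mul_assoc]
        rw [comm_u_A]

end Gmn
end

section
/- For all integers m, n ≥ 1, the monoid G⁺_{m,n} is cancellative: for all A, B, X, Y ∈ G⁺_{m,n}, A·X·B = A·Y·B implies X = Y. -/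
namespace Gmn
section Chains

variable {α : Type*} (rel : FreeMonoid α → FreeMonoid α → Prop)

/-- One rewriting step for a presentation. -/
def SStep (x y : List α) : Prop :=
  ∃ (p q : List α) (A B : FreeMonoid α),
    (rel A B ∨ rel B A) ∧ x = p ++ FreeMonoid.toList A ++ q ∧ y = p ++ FreeMonoid.toList B ++ q

/-- Chains of rewriting steps. -/
abbrev SChain : List α → List α → Prop := Relation.ReflTransGen (SStep rel)

variable {rel}

theorem SStep.symm {x y : List α} (h : SStep rel x y) : SStep rel y x := by
  obtain ⟨p, q, A, B, hr, hx, hy⟩ := h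
  exact ⟨p, q, B, A, hr.symm, hy, hx⟩

theorem SChain.symm {x y : List α} (h : SChain rel x y) : SChain rel y x := by
  induction h with
  | refl => exact Relation.ReflTransGen.refl
  | tail _ hstep ih => exact Relation.ReflTransGen.head hstep.symm ih

theorem SStep.append_left {x y : List α} (c : List α) (h : SStep rel x y) :
    SStep rel (c ++ x) (c ++ y) := by
  obtain ⟨p, q, A, B, hr, hx, hy⟩ := h
  exact ⟨c ++ p, q, A, B, hr, by simp [hx], by simp [hy]⟩

theorem SStep.append_right {x y : List α} (c : List α) (h : SStep rel x y) :
    SStep rel (x ++ c) (y ++ c) := by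
  obtain ⟨p, q, A, B, hr, hx, hy⟩ := h
  exact ⟨p, q ++ c, A, B, hr, by simp [hx], by simp [hy]⟩

theorem SChain.append_left {x y : List α} (c : List α) (h : SChain rel x y) :
    SChain rel (c ++ x) (c ++ y) := by
  induction h with
  | refl => exact Relation.ReflTransGen.refl
  | tail _ hstep ih => exact ih.tail (hstep.append_left c)

theorem SChain.append_right {x y : List α} (c : List α) (h : SChain rel x y) :
    SChain rel (x ++ c) (y ++ c) := by
  induction h with
  | refl => exact Relation.ReflTransGen.refl
  | tail _ hstep ih => exact ih.tail (hstep.append_right c)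

theorem SChain.append {x x' y y' : List α} (h1 : SChain rel x x') (h2 : SChain rel y y') :
    SChain rel (x ++ y) (x' ++ y') :=
  (h1.append_right y).trans (h2.append_left x')

theorem mk_eq_of_schain {x y : List α} (h : SChain rel x y) :
    PresentedMonoid.mk rel (.ofList x) = PresentedMonoid.mk rel (.ofList y) := by
  induction h with
  | refl => rfl
  | tail _ hstep ih =>
    refine ih.trans ?_
    obtain ⟨p, q, A, B, hr, hx, hy⟩ := hstep
    subst hx hy
    have hAB : PresentedMonoid.mk rel A = PresentedMonoid.mk rel B := by
      rcases hr with hr | hr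
      · exact (Con.eq _).mpr (ConGen.Rel.of _ _ hr)
      · exact ((Con.eq _).mpr (ConGen.Rel.of _ _ hr)).symm
    have hA : FreeMonoid.ofList (p ++ FreeMonoid.toList A ++ q)
        = FreeMonoid.ofList p * A * FreeMonoid.ofList q := by
      rw [FreeMonoid.ofList_append, FreeMonoid.ofList_append, FreeMonoid.ofList_toList]
    have hB : FreeMonoid.ofList (p ++ FreeMonoid.toList B ++ q)
        = FreeMonoid.ofList p * B * FreeMonoid.ofList q := by
      rw [FreeMonoid.ofList_append, FreeMonoid.ofList_append, FreeMonoid.ofList_toList]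
    rw [hA, hB, map_mul, map_mul, map_mul, map_mul, hAB]

theorem schain_of_mk_eq {x y : List α}
    (h : PresentedMonoid.mk rel (.ofList x) = PresentedMonoid.mk rel (.ofList y)) :
    SChain rel x y := by
  have h' : ConGen.Rel rel (.ofList x) (.ofList y) := (Con.eq _).mp h
  have key : ∀ A B : FreeMonoid α, ConGen.Rel rel A B →
      SChain rel (FreeMonoid.toList A) (FreeMonoid.toList B) := by
    intro A B hAB
    induction hAB with
    | of a b hab =>
      exact Relation.ReflTransGen.single ⟨[], [], a, b, Or.inl hab, by simp, by simp⟩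
    | refl => exact Relation.ReflTransGen.refl
    | symm _ ih => exact ih.symm
    | trans _ _ ih1 ih2 => exact ih1.trans ih2
    | mul _ _ ih1 ih2 => exact ih1.append ih2
  exact key _ _ h'

end Chains






section Cyclic

/-- Rotations of the base word `0 1 ⋯ (k-1)` over `Fin k`. -/
def RC (k : ℕ) (i : ℕ) : List (Fin k) := (List.finRange k).rotate i

/-- One step of the cyclic rewriting system: replace a rotation of the base word by another. -/
def StepC (k : ℕ) (x y : List (Fin k)) : Prop :=
  ∃ (p q : List (Fin k)) (i j : ℕ), x = p ++ RC k i ++ q ∧ y = p ++ RC k j ++ q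

abbrev ChainC (k : ℕ) : List (Fin k) → List (Fin k) → Prop := Relation.ReflTransGen (StepC k)

/-- Tail of the rotation of the base word starting at `a`. -/
def Ctail {k : ℕ} (a : Fin k) : List (Fin k) :=
  (List.finRange k).drop ((a : ℕ) + 1) ++ (List.finRange k).take (a : ℕ)

variable {k : ℕ}

theorem RC_mod (i : ℕ) : RC k i = RC k (i % k) := by
  unfold RC
  rw [← List.rotate_mod (List.finRange k) i, List.length_finRange]

theorem length_RC (i : ℕ) : (RC k i).length = k := by
  simp [RC]

theorem RC_cons (a : Fin k) : RC k (a : ℕ) = a :: Ctail a := by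
  unfold RC Ctail
  rw [List.rotate_eq_drop_append_take (by rw [List.length_finRange]; exact a.2.le)]
  have h : (List.finRange k).drop (a : ℕ) = a :: (List.finRange k).drop ((a : ℕ) + 1) := by
    rw [List.drop_eq_getElem_cons (by rw [List.length_finRange]; exact a.2)]
    simp
  rw [h]; simp

theorem length_Ctail (a : Fin k) : (Ctail a).length = k - 1 := by
  have h := length_RC (k := k) (a : ℕ)
  rw [RC_cons a] at h
  simp only [List.length_cons] at h
  omega

theorem StepC.symm {x y : List (Fin k)} (h : StepC k x y) : StepC k y x := by
  obtain ⟨p, q, i, j, hx, hy⟩ := h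
  exact ⟨p, q, j, i, hy, hx⟩

theorem ChainC.symm {x y : List (Fin k)} (h : ChainC k x y) : ChainC k y x := by
  induction h with
  | refl => exact .refl
  | tail _ hstep ih => exact .head hstep.symm ih

theorem StepC.append_left {x y : List (Fin k)} (c : List (Fin k)) (h : StepC k x y) :
    StepC k (c ++ x) (c ++ y) := by
  obtain ⟨p, q, i, j, hx, hy⟩ := h
  exact ⟨c ++ p, q, i, j, by simp [hx], by simp [hy]⟩

theorem StepC.append_right {x y : List (Fin k)} (c : List (Fin k)) (h : StepC k x y) :
    StepC k (x ++ c) (y ++ c) := by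
  obtain ⟨p, q, i, j, hx, hy⟩ := h
  exact ⟨p, q ++ c, i, j, by simp [hx], by simp [hy]⟩

theorem ChainC.append_left {x y : List (Fin k)} (c : List (Fin k)) (h : ChainC k x y) :
    ChainC k (c ++ x) (c ++ y) := by
  induction h with
  | refl => exact .refl
  | tail _ hstep ih => exact ih.tail (hstep.append_left c)

theorem ChainC.append_right {x y : List (Fin k)} (c : List (Fin k)) (h : ChainC k x y) :
    ChainC k (x ++ c) (y ++ c) := by
  induction h with
  | refl => exact .refl
  | tail _ hstep ih => exact ih.tail (hstep.append_right c)

theorem StepC.length {x y : List (Fin k)} (h : StepC k x y) : x.length = y.length := by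
  obtain ⟨p, q, i, j, hx, hy⟩ := h
  simp [hx, hy, length_RC]

theorem ChainC.length {x y : List (Fin k)} (h : ChainC k x y) : x.length = y.length := by
  induction h with
  | refl => rfl
  | tail _ hstep ih => exact ih.trans hstep.length

/-- The key "division" claim, by double induction. -/
theorem genClaim (hk : 0 < k) :
    ∀ N : ℕ, ∀ (x y : List (Fin k)), ChainC k x y →
      ∀ (a b : Fin k) (u v : List (Fin k)), x = a :: u → y = b :: v → u.length < N →
      (a = b ∧ ChainC k u v) ∨
        ∃ w, ChainC k u (Ctail a ++ w) ∧ ChainC k v (Ctail b ++ w) := by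
  intro N
  induction N using Nat.strong_induction_on with
  | _ N IH =>
  have genCancel : ∀ (g : Fin k) (r1 r2 : List (Fin k)), r1.length + 1 < N →
      ChainC k (g :: r1) (g :: r2) → ChainC k r1 r2 := by
    intro g r1 r2 hlen hch
    rcases IH (r1.length + 1) (by omega) _ _ hch g g r1 r2 rfl rfl (Nat.lt_succ_self _) with
      ⟨_, h⟩ | ⟨w, h1, h2⟩
    · exact h
    · exact h1.trans h2.symm
  have multiCancel : ∀ (L r1 r2 : List (Fin k)), (L ++ r1).length < N →
      ChainC k (L ++ r1) (L ++ r2) → ChainC k r1 r2 := by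
    intro L
    induction L with
    | nil => intro r1 r2 _ h; simpa using h
    | cons g L' ih =>
      intro r1 r2 hlen hch
      simp only [List.cons_append] at hch
      simp only [List.length_cons, List.length_append] at hlen
      refine ih r1 r2 (by simp; omega) ?_
      exact genCancel g (L' ++ r1) (L' ++ r2) (by simp; omega) hch
  intro x y hch
  induction hch using Relation.ReflTransGen.head_induction_on with
  | refl =>
    intro a b u v hx hy hlen
    rw [hx] at hy
    obtain ⟨rfl, rfl⟩ : a = b ∧ u = v := by simpa using hy
    exact Or.inl ⟨rfl, .refl⟩
  | head hstep hchain ih =>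
    intro a b u v hx hy hlen
    subst hx
    subst hy
    obtain ⟨p, q, i, j, hxx, hz⟩ := hstep
    subst hz
    cases p with
    | nil =>
      rw [RC_mod i] at hxx
      have hik : i % k < k := Nat.mod_lt _ hk
      have hjk : j % k < k := Nat.mod_lt _ hk
      set a' : Fin k := ⟨i % k, hik⟩ with ha'
      set c : Fin k := ⟨j % k, hjk⟩ with hc
      have hxx' : a :: u = a' :: (Ctail a' ++ q) := by
        rw [show RC k (i % k) = RC k ((a' : ℕ)) from rfl, RC_cons] at hxx
        simpa using hxx
      obtain ⟨hab, hu⟩ : a = a' ∧ u = Ctail a' ++ q := by simpa using hxx'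
      have hcz : ([] : List (Fin k)) ++ RC k j ++ q = c :: (Ctail c ++ q) := by
        rw [RC_mod j, show RC k (j % k) = RC k ((c : ℕ)) from rfl, RC_cons]
        simp
      have hlen2 : (Ctail c ++ q).length < N := by
        have h1 := length_Ctail (k := k) a'
        have h2 := length_Ctail (k := k) c
        rw [hu] at hlen
        simp only [List.length_append] at *
        omega
      rcases ih c b (Ctail c ++ q) v hcz rfl hlen2 with ⟨hcb, hcv⟩ | ⟨w, hw1, hw2⟩
      · refine Or.inr ⟨q, by rw [hu, hab], ?_⟩
        rw [← hcb]
        exact hcv.symm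
      · have hq : ChainC k q w := multiCancel (Ctail c) q w (by omega) hw1
        refine Or.inr ⟨w, ?_, hw2⟩
        rw [hu, hab]
        exact hq.append_left _
    | cons p0 p' =>
      have hxx' : a :: u = p0 :: (p' ++ RC k i ++ q) := by simpa using hxx
      obtain ⟨hap, hu⟩ : a = p0 ∧ u = p' ++ RC k i ++ q := by simpa using hxx'
      have hstep' : StepC k u (p' ++ RC k j ++ q) := ⟨p', q, i, j, hu, rfl⟩
      have hzz : (p0 :: p') ++ RC k j ++ q = p0 :: (p' ++ RC k j ++ q) := by simp
      have hlen2 : (p' ++ RC k j ++ q).length < N := by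
        have hl : u.length = (p' ++ RC k j ++ q).length := hstep'.length
        omega
      rcases ih p0 b (p' ++ RC k j ++ q) v hzz rfl hlen2 with ⟨hpb, hcv⟩ | ⟨w, hw1, hw2⟩
      · exact Or.inl ⟨hap.trans hpb, .head hstep' hcv⟩
      · refine Or.inr ⟨w, ?_, hw2⟩
        rw [hap]
        exact .head hstep' hw1

theorem chainC_cancel_left (hk : 0 < k) (L : List (Fin k)) :
    ∀ r1 r2 : List (Fin k), ChainC k (L ++ r1) (L ++ r2) → ChainC k r1 r2 := by
  induction L with
  | nil => intro r1 r2 h; simpa using h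
  | cons g L' ih =>
    intro r1 r2 hch
    simp only [List.cons_append] at hch
    have := genClaim hk ((L' ++ r1).length + 1) _ _ hch g g _ _ rfl rfl (Nat.lt_succ_self _)
    rcases this with ⟨_, h⟩ | ⟨w, h1, h2⟩
    · exact ih _ _ h
    · exact ih _ _ (h1.trans h2.symm)

end Cyclic



section Cyclic2
variable {k : ℕ}

theorem finRange_reverse_eq (k : ℕ) : (List.finRange k).reverse = (List.finRange k).map Fin.rev := by
  apply List.ext_getElem
  · simp
  · intro i h1 h2
    simp only [List.getElem_reverse, List.getElem_map, List.getElem_finRange, Fin.rev]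
    ext
    simp only [List.length_finRange] at *
    simp [Fin.cast, Fin.rev]
    omega

/-- Word reversal combined with index reversal. -/
def revW (w : List (Fin k)) : List (Fin k) := w.reverse.map Fin.rev

theorem revW_append (x y : List (Fin k)) : revW (x ++ y) = revW y ++ revW x := by
  simp [revW]

theorem revW_revW (w : List (Fin k)) : revW (revW w) = w := by
  simp [revW, List.map_reverse, List.map_map, Function.comp_def]

theorem revW_RC (i : ℕ) : revW (RC k i) = RC k (k - i % k) := by
  unfold revW RC
  rw [List.reverse_rotate, List.length_finRange, List.map_rotate, finRange_reverse_eq,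
    List.map_map]
  simp [Function.comp_def, Fin.rev_rev]

theorem StepC.rev {x y : List (Fin k)} (h : StepC k x y) : StepC k (revW x) (revW y) := by
  obtain ⟨p, q, i, j, hx, hy⟩ := h
  refine ⟨revW q, revW p, k - i % k, k - j % k, ?_, ?_⟩
  · rw [hx, revW_append, revW_append, revW_RC, List.append_assoc]
  · rw [hy, revW_append, revW_append, revW_RC, List.append_assoc]

theorem ChainC.rev {x y : List (Fin k)} (h : ChainC k x y) : ChainC k (revW x) (revW y) := by
  induction h with
  | refl => exact .refl
  | tail _ hstep ih => exact ih.tail hstep.rev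

theorem chainC_cancel_right (hk : 0 < k) (L : List (Fin k)) (r1 r2 : List (Fin k))
    (h : ChainC k (r1 ++ L) (r2 ++ L)) : ChainC k r1 r2 := by
  have h2 := h.rev
  rw [revW_append, revW_append] at h2
  have h3 := chainC_cancel_left hk (revW L) _ _ h2
  have h4 := h3.rev
  rwa [revW_revW, revW_revW] at h4

end Cyclic2

section Shadows

variable {m n : ℕ}

/-- Is a letter a `t`-letter? -/
def isT : Gen m n → Bool
  | .t _ => true
  | _ => false

/-- Is a letter a `u`-letter? -/
def isU : Gen m n → Bool
  | .u _ => true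
  | _ => false

/-- The `t`-shadow letter map. -/
def sigT : Gen m n → Option (Fin (m + 1))
  | .s => some 0
  | .t i => some i.succ
  | .u _ => none

/-- The `u`-shadow letter map. -/
def sigU : Gen m n → Option (Fin (n + 1))
  | .s => some 0
  | .u j => some j.succ
  | .t _ => none

/-- The `t`-shadow of a word. -/
def shT (w : List (Gen m n)) : List (Fin (m + 1)) := w.filterMap sigT

/-- The `u`-shadow of a word. -/
def shU (w : List (Gen m n)) : List (Fin (n + 1)) := w.filterMap sigU

/-- Back from `Fin (m+1)` to letters. -/
def kT : Fin (m + 1) → Gen m n := Fin.cases Gen.s Gen.t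

/-- Back from `Fin (n+1)` to letters. -/
def kU : Fin (n + 1) → Gen m n := Fin.cases Gen.s Gen.u

theorem shT_append (x y : List (Gen m n)) : shT (x ++ y) = shT x ++ shT y :=
  List.filterMap_append

theorem shU_append (x y : List (Gen m n)) : shU (x ++ y) = shU x ++ shU y :=
  List.filterMap_append

theorem length_wordT : (wordT m n).length = m + 1 := by simp [wordT]

theorem length_wordU : (wordU m n).length = n + 1 := by simp [wordU]

theorem shT_wordT : shT (wordT m n) = List.finRange (m + 1) := by
  have h1 : sigT (Gen.s : Gen m n) = some 0 := rfl
  have h2 : (sigT ∘ (Gen.t : Fin m → Gen m n)) = fun i => some i.succ := rfl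
  simp only [wordT, shT, List.filterMap_cons, h1]
  rw [List.ofFn_eq_map, List.filterMap_map, h2,
    show (fun i : Fin m => some i.succ) = some ∘ Fin.succ from rfl,
    List.filterMap_eq_map, List.finRange_succ]

theorem shU_wordU : shU (wordU m n) = List.finRange (n + 1) := by
  have h1 : sigU (Gen.s : Gen m n) = some 0 := rfl
  have h2 : (sigU ∘ (Gen.u : Fin n → Gen m n)) = fun i => some i.succ := rfl
  simp only [wordU, shU, List.filterMap_cons, h1]
  rw [List.ofFn_eq_map, List.filterMap_map, h2,
    show (fun i : Fin n => some i.succ) = some ∘ Fin.succ from rfl,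
    List.filterMap_eq_map, List.finRange_succ]

theorem shT_wordU : shU (wordT m n) = [0] := by
  have h1 : sigU (Gen.s : Gen m n) = some 0 := rfl
  have h2 : ∀ i : Fin m, sigU (Gen.t i : Gen m n) = none := fun _ => rfl
  simp only [wordT, shU, List.filterMap_cons, h1]
  rw [List.filterMap_eq_nil_iff.mpr]
  intro a ha
  obtain ⟨i, rfl⟩ := List.mem_ofFn.mp ha
  exact h2 i

theorem shU_wordT : shT (wordU m n) = [0] := by
  have h1 : sigT (Gen.s : Gen m n) = some 0 := rfl
  have h2 : ∀ i : Fin n, sigT (Gen.u i : Gen m n) = none := fun _ => rfl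
  simp only [wordU, shT, List.filterMap_cons, h1]
  rw [List.filterMap_eq_nil_iff.mpr]
  intro a ha
  obtain ⟨i, rfl⟩ := List.mem_ofFn.mp ha
  exact h2 i

section FM
variable {γ δ : Type*} {f : γ → Option δ}

theorem fm_length {l : List γ} (h : ∀ x ∈ l, (f x).isSome) :
    (l.filterMap f).length = l.length := by
  induction l with
  | nil => rfl
  | cons a l ih =>
    obtain ⟨b, hb⟩ := Option.isSome_iff_exists.mp (h a (by simp))
    rw [List.filterMap_cons, hb]
    simp only [List.length_cons]
    rw [ih fun x hx => h x (by simp [hx])]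

theorem fm_take {l : List γ} (h : ∀ x ∈ l, (f x).isSome) (k : ℕ) :
    (l.take k).filterMap f = (l.filterMap f).take k := by
  induction l generalizing k with
  | nil => simp
  | cons a l ih =>
    cases k with
    | zero => simp
    | succ k =>
      obtain ⟨b, hb⟩ := Option.isSome_iff_exists.mp (h a (by simp))
      simp only [List.take_succ_cons, List.filterMap_cons, hb]
      rw [ih fun x hx => h x (by simp [hx])]

theorem fm_drop {l : List γ} (h : ∀ x ∈ l, (f x).isSome) (k : ℕ) :
    (l.drop k).filterMap f = (l.filterMap f).drop k := by
  induction l generalizing k with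
  | nil => simp
  | cons a l ih =>
    cases k with
    | zero => simp
    | succ k =>
      obtain ⟨b, hb⟩ := Option.isSome_iff_exists.mp (h a (by simp))
      simp only [List.drop_succ_cons, List.filterMap_cons, hb]
      rw [ih fun x hx => h x (by simp [hx])]

theorem fm_rotate {l : List γ} (h : ∀ x ∈ l, (f x).isSome) (k : ℕ) :
    (l.rotate k).filterMap f = (l.filterMap f).rotate k := by
  rw [List.rotate_eq_drop_append_take_mod, List.rotate_eq_drop_append_take_mod,
    List.filterMap_append, fm_length h, fm_take h, fm_drop h]

theorem append_singleton_comm {A B : List γ} {x : γ} (h : A ++ B = [x]) : B ++ A = [x] := by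
  cases A with
  | nil => simpa using h
  | cons a A' =>
    simp only [List.cons_append, List.cons.injEq] at h
    obtain ⟨rfl, h2⟩ := h
    obtain ⟨h3, h4⟩ := List.append_eq_nil_iff.mp h2
    simp [h3, h4]

end FM

theorem wordT_all_someT : ∀ x ∈ wordT m n, (sigT x).isSome := by
  intro x hx
  simp only [wordT, List.mem_cons, List.mem_ofFn] at hx
  rcases hx with rfl | ⟨i, rfl⟩ <;> simp [sigT]

theorem wordU_all_someU : ∀ x ∈ wordU m n, (sigU x).isSome := by
  intro x hx
  simp only [wordU, List.mem_cons, List.mem_ofFn] at hx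
  rcases hx with rfl | ⟨i, rfl⟩ <;> simp [sigU]

theorem shT_wordT_rotate (i : ℕ) :
    shT ((wordT m n).rotate i) = (List.finRange (m + 1)).rotate i := by
  rw [shT, fm_rotate wordT_all_someT, ← shT, shT_wordT]

theorem shU_wordU_rotate (i : ℕ) :
    shU ((wordU m n).rotate i) = (List.finRange (n + 1)).rotate i := by
  rw [shU, fm_rotate wordU_all_someU, ← shU, shU_wordU]

theorem shT_wordU_rotate (i : ℕ) : shT ((wordU m n).rotate i) = [0] := by
  rw [List.rotate_eq_drop_append_take_mod, shT, List.filterMap_append]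
  apply append_singleton_comm
  rw [← List.filterMap_append, List.take_append_drop]
  exact shU_wordT

theorem shU_wordT_rotate (i : ℕ) : shU ((wordT m n).rotate i) = [0] := by
  rw [List.rotate_eq_drop_append_take_mod, shU, List.filterMap_append]
  apply append_singleton_comm
  rw [← List.filterMap_append, List.take_append_drop]
  exact shT_wordU

/-- A GP rewriting step induces a chain on `t`-shadows. -/
theorem shT_step {x y : List (Gen m n)} (h : SStep (Rel m n) x y) :
    ChainC (m + 1) (shT x) (shT y) := by
  have key : ∀ (A B : FreeMonoid (Gen m n)), Rel m n A B → ∀ p q : List (Gen m n),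
      ChainC (m + 1) (shT (p ++ FreeMonoid.toList A ++ q)) (shT (p ++ FreeMonoid.toList B ++ q)) := by
    intro A B hAB p q
    rw [shT_append, shT_append, shT_append, shT_append]
    cases hAB with
    | rotT j =>
      refine Relation.ReflTransGen.single ?_
      refine ⟨shT p, shT q, 0, j, ?_, ?_⟩
      · have : shT (FreeMonoid.toList (FreeMonoid.ofList (wordT m n))) = RC (m+1) 0 := by
          rw [FreeMonoid.toList_ofList, shT_wordT]
          simp [RC]
        rw [this]
      · have : shT (FreeMonoid.toList (FreeMonoid.ofList ((wordT m n).rotate j))) = RC (m+1) j := by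
          rw [FreeMonoid.toList_ofList, shT_wordT_rotate]
          rfl
        rw [this]
    | rotU j =>
      have h1 : shT (FreeMonoid.toList (FreeMonoid.ofList (wordU m n))) = [0] := shU_wordT
      have h2 : shT (FreeMonoid.toList (FreeMonoid.ofList ((wordU m n).rotate j))) = [0] :=
        shT_wordU_rotate j
      rw [h1, h2]
    | comm i j =>
      have h1 : shT (FreeMonoid.toList (FreeMonoid.of (Gen.t i) * FreeMonoid.of (Gen.u j)))
          = [i.succ] := rfl
      have h2 : shT (FreeMonoid.toList (FreeMonoid.of (Gen.u j) * FreeMonoid.of (Gen.t i)))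
          = [i.succ] := rfl
      rw [h1, h2]
  obtain ⟨p, q, A, B, hr, hx, hy⟩ := h
  subst hx hy
  rcases hr with hr | hr
  · exact key A B hr p q
  · exact (key B A hr p q).symm

/-- A GP rewriting step induces a chain on `u`-shadows. -/
theorem shU_step {x y : List (Gen m n)} (h : SStep (Rel m n) x y) :
    ChainC (n + 1) (shU x) (shU y) := by
  have key : ∀ (A B : FreeMonoid (Gen m n)), Rel m n A B → ∀ p q : List (Gen m n),
      ChainC (n + 1) (shU (p ++ FreeMonoid.toList A ++ q)) (shU (p ++ FreeMonoid.toList B ++ q)) := by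
    intro A B hAB p q
    rw [shU_append, shU_append, shU_append, shU_append]
    cases hAB with
    | rotU j =>
      refine Relation.ReflTransGen.single ?_
      refine ⟨shU p, shU q, 0, j, ?_, ?_⟩
      · have : shU (FreeMonoid.toList (FreeMonoid.ofList (wordU m n))) = RC (n+1) 0 := by
          rw [FreeMonoid.toList_ofList, shU_wordU]
          simp [RC]
        rw [this]
      · have : shU (FreeMonoid.toList (FreeMonoid.ofList ((wordU m n).rotate j))) = RC (n+1) j := by
          rw [FreeMonoid.toList_ofList, shU_wordU_rotate]
          rfl
        rw [this]
    | rotT j =>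
      have h1 : shU (FreeMonoid.toList (FreeMonoid.ofList (wordT m n))) = [0] := shT_wordU
      have h2 : shU (FreeMonoid.toList (FreeMonoid.ofList ((wordT m n).rotate j))) = [0] :=
        shU_wordT_rotate j
      rw [h1, h2]
    | comm i j =>
      have h1 : shU (FreeMonoid.toList (FreeMonoid.of (Gen.t i) * FreeMonoid.of (Gen.u j)))
          = [j.succ] := rfl
      have h2 : shU (FreeMonoid.toList (FreeMonoid.of (Gen.u j) * FreeMonoid.of (Gen.t i)))
          = [j.succ] := rfl
      rw [h1, h2]
  obtain ⟨p, q, A, B, hr, hx, hy⟩ := h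
  subst hx hy
  rcases hr with hr | hr
  · exact key A B hr p q
  · exact (key B A hr p q).symm

theorem shT_chain {x y : List (Gen m n)} (h : SChain (Rel m n) x y) :
    ChainC (m + 1) (shT x) (shT y) := by
  induction h with
  | refl => exact .refl
  | tail _ hstep ih => exact ih.trans (shT_step hstep)

theorem shU_chain {x y : List (Gen m n)} (h : SChain (Rel m n) x y) :
    ChainC (n + 1) (shU x) (shU y) := by
  induction h with
  | refl => exact .refl
  | tail _ hstep ih => exact ih.trans (shU_step hstep)

end Shadows

section Inter

variable {m n : ℕ}

/-- The image of a word in the presented monoid. -/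
def E (w : List (Gen m n)) : GP m n := PresentedMonoid.mk (Rel m n) (FreeMonoid.ofList w)

theorem E_append (x y : List (Gen m n)) : E (x ++ y) = E x * E y := by
  rw [E, FreeMonoid.ofList_append, map_mul]; rfl

theorem E_cons (x : Gen m n) (w : List (Gen m n)) : E (x :: w) = E [x] * E w :=
  E_append [x] w

theorem E_of_rel {A B : FreeMonoid (Gen m n)} (h : Rel m n A B) :
    PresentedMonoid.mk (Rel m n) A = PresentedMonoid.mk (Rel m n) B :=
  (Con.eq _).mpr (ConGen.Rel.of _ _ h)

theorem E_rotT (j : ℕ) : E (wordT m n) = E ((wordT m n).rotate j) :=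
  E_of_rel (Rel.rotT j)

theorem E_rotU (j : ℕ) : E (wordU m n) = E ((wordU m n).rotate j) :=
  E_of_rel (Rel.rotU j)

theorem E_comm_tu (i : Fin m) (j : Fin n) :
    E [Gen.t i, Gen.u j] = E ([Gen.u j, Gen.t i] : List (Gen m n)) :=
  E_of_rel (Rel.comm i j)

/-- Words with no `u`-letters. -/
def NoU (w : List (Gen m n)) : Prop := ∀ x ∈ w, isU x = false

/-- Words with no `t`-letters. -/
def NoT (w : List (Gen m n)) : Prop := ∀ x ∈ w, isT x = false

/-- Words of `t`-letters only. -/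
def AllT (w : List (Gen m n)) : Prop := ∀ x ∈ w, isT x = true

/-- Words of `u`-letters only. -/
def AllU (w : List (Gen m n)) : Prop := ∀ x ∈ w, isU x = true

theorem eq_t_of_isT {x : Gen m n} (h : isT x = true) : ∃ i, x = Gen.t i := by
  cases x <;> simp [isT] at h ⊢

theorem eq_u_of_isU {x : Gen m n} (h : isU x = true) : ∃ j, x = Gen.u j := by
  cases x <;> simp [isU] at h ⊢

theorem eq_s_of_no {x : Gen m n} (h1 : isT x = false) (h2 : isU x = false) : x = Gen.s := by
  cases x <;> simp [isT, isU] at h1 h2 ⊢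

theorem E_swap_uT {V : List (Gen m n)} (hV : AllT V) (j : Fin n) :
    E (Gen.u j :: V) = E (V ++ [Gen.u j]) := by
  induction V with
  | nil => rfl
  | cons x V' ih =>
    obtain ⟨i, rfl⟩ := eq_t_of_isT (hV x (List.mem_cons_self))
    have hV' : AllT V' := fun y hy => hV y (List.mem_cons_of_mem _ hy)
    calc E (Gen.u j :: Gen.t i :: V') = E [Gen.u j, Gen.t i] * E V' :=
          E_append [Gen.u j, Gen.t i] V'
      _ = E [Gen.t i, Gen.u j] * E V' := by rw [← E_comm_tu]
      _ = E [Gen.t i] * (E (Gen.u j :: V')) := by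
          rw [E_cons (Gen.t i) [Gen.u j], mul_assoc, ← E_cons]
      _ = E [Gen.t i] * E (V' ++ [Gen.u j]) := by rw [ih hV']
      _ = E (Gen.t i :: (V' ++ [Gen.u j])) := (E_cons _ _).symm
      _ = E ((Gen.t i :: V') ++ [Gen.u j]) := rfl

theorem E_swap_UT {U V : List (Gen m n)} (hU : AllU U) (hV : AllT V) :
    E (U ++ V) = E (V ++ U) := by
  induction U with
  | nil => simp
  | cons x U' ih =>
    obtain ⟨j, rfl⟩ := eq_u_of_isU (hU x (List.mem_cons_self))
    have hU' : AllU U' := fun y hy => hU y (List.mem_cons_of_mem _ hy)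
    calc E ((Gen.u j :: U') ++ V) = E [Gen.u j] * E (U' ++ V) := E_cons _ _
      _ = E [Gen.u j] * E (V ++ U') := by rw [ih hU']
      _ = E [Gen.u j] * (E V * E U') := by rw [E_append V U']
      _ = E (Gen.u j :: V) * E U' := by rw [← mul_assoc, ← E_cons]
      _ = E (V ++ [Gen.u j]) * E U' := by rw [E_swap_uT hV]
      _ = E V * E [Gen.u j] * E U' := by rw [E_append V [Gen.u j]]
      _ = E V * E (Gen.u j :: U') := by rw [mul_assoc, ← E_cons]
      _ = E (V ++ (Gen.u j :: U')) := (E_append _ _).symm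

theorem E_mul_comm {U V : List (Gen m n)} (hU : AllU U) (hV : AllT V) :
    E U * E V = E V * E U := by
  rw [← E_append, ← E_append, E_swap_UT hU hV]

/-- Interleaving of a `{s,t}`-word and a `{s,u}`-word, matching up the `s`'s. -/
def inter : List (Gen m n) → List (Gen m n) → List (Gen m n)
  | [], b => b
  | Gen.s :: a, b => b.takeWhile isU ++ Gen.s :: inter a (b.dropWhile isU).tail
  | Gen.t i :: a, b => Gen.t i :: inter a b
  | Gen.u j :: a, b => Gen.u j :: inter a b

@[simp] theorem inter_nil (b : List (Gen m n)) : inter [] b = b := rfl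

@[simp] theorem inter_t (i : Fin m) (a b : List (Gen m n)) :
    inter (Gen.t i :: a) b = Gen.t i :: inter a b := rfl

@[simp] theorem inter_u (j : Fin n) (a b : List (Gen m n)) :
    inter (Gen.u j :: a) b = Gen.u j :: inter a b := rfl

@[simp] theorem inter_s (a b : List (Gen m n)) :
    inter (Gen.s :: a) b = b.takeWhile isU ++ Gen.s :: inter a (b.dropWhile isU).tail := rfl

theorem inter_allT_append {T : List (Gen m n)} (hT : AllT T) (a b : List (Gen m n)) :
    inter (T ++ a) b = T ++ inter a b := by
  induction T with
  | nil => simp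
  | cons x T' ih =>
    obtain ⟨i, rfl⟩ := eq_t_of_isT (hT x (List.mem_cons_self))
    rw [List.cons_append, inter_t, ih fun y hy => hT y (List.mem_cons_of_mem _ hy),
      List.cons_append]

section WhileLemmas
variable {γ : Type*} {p : γ → Bool}

theorem takeWhile_allP_append {U : List γ} (h : ∀ x ∈ U, p x = true) (c : List γ) :
    (U ++ c).takeWhile p = U ++ c.takeWhile p := by
  induction U with
  | nil => simp
  | cons x U' ih =>
    rw [List.cons_append, List.takeWhile_cons_of_pos (h x (List.mem_cons_self)),
      ih fun y hy => h y (List.mem_cons_of_mem _ hy), List.cons_append]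

theorem dropWhile_allP_append {U : List γ} (h : ∀ x ∈ U, p x = true) (c : List γ) :
    (U ++ c).dropWhile p = c.dropWhile p := by
  induction U with
  | nil => simp
  | cons x U' ih =>
    rw [List.cons_append, List.dropWhile_cons_of_pos (h x (List.mem_cons_self)),
      ih fun y hy => h y (List.mem_cons_of_mem _ hy)]

theorem dropWhile_head_false {b : List γ} {x : γ} {r : List γ}
    (h : b.dropWhile p = x :: r) : p x = false := by
  induction b with
  | nil => simp at h
  | cons a b' ih =>
    by_cases ha : p a
    · rw [List.dropWhile_cons_of_pos ha] at h
      exact ih h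
    · rw [List.dropWhile_cons_of_neg ha] at h
      injection h with h1 h2
      subst h1
      simpa using ha

end WhileLemmas

theorem allU_takeWhile (b : List (Gen m n)) : AllU (b.takeWhile isU) :=
  fun _ hx => List.mem_takeWhile_imp hx

theorem allT_ofFn : AllT (List.ofFn (Gen.t : Fin m → Gen m n)) := by
  intro x hx
  obtain ⟨i, rfl⟩ := List.mem_ofFn.mp hx
  rfl

theorem allU_ofFn : AllU (List.ofFn (Gen.u : Fin n → Gen m n)) := by
  intro x hx
  obtain ⟨i, rfl⟩ := List.mem_ofFn.mp hx
  rfl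

theorem allT_take {T : List (Gen m n)} (h : AllT T) (j : ℕ) : AllT (T.take j) :=
  fun x hx => h x (List.take_subset _ _ hx)

theorem allT_drop {T : List (Gen m n)} (h : AllT T) (j : ℕ) : AllT (T.drop j) :=
  fun x hx => h x (List.drop_subset _ _ hx)

theorem allU_take {T : List (Gen m n)} (h : AllU T) (j : ℕ) : AllU (T.take j) :=
  fun x hx => h x (List.take_subset _ _ hx)

theorem allU_drop {T : List (Gen m n)} (h : AllU T) (j : ℕ) : AllU (T.drop j) :=
  fun x hx => h x (List.drop_subset _ _ hx)

/-- Peeling a `u`-block off the second argument of `inter`. -/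
theorem E_inter_U_peel {U : List (Gen m n)} (hU : AllU U) :
    ∀ {a : List (Gen m n)}, NoU a → ∀ c : List (Gen m n),
    E (inter a (U ++ c)) = E U * E (inter a c) := by
  intro a
  induction a with
  | nil => intro _ c; rw [inter_nil, inter_nil, E_append]
  | cons x a' ih =>
    intro ha c
    have ha' : NoU a' := fun y hy => ha y (List.mem_cons_of_mem _ hy)
    match x, ha x (List.mem_cons_self) with
    | Gen.s, _ =>
      rw [inter_s, inter_s, takeWhile_allP_append hU, dropWhile_allP_append hU,
        List.append_assoc, E_append, E_append]
    | Gen.t i, _ =>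
      have hTt : AllT ([Gen.t i] : List (Gen m n)) := by intro y hy; simp at hy; subst hy; rfl
      rw [inter_t, inter_t, E_cons (Gen.t i) (inter a' (U ++ c)), ih ha' c,
        ← mul_assoc, ← E_mul_comm hU hTt, mul_assoc, ← E_cons]

/-- Computing the rotation of `wordT` by a positive amount. -/
theorem wordT_rotate_succ (j : ℕ) (hj : j + 1 ≤ m + 1) :
    (wordT m n).rotate (j + 1) =
      (List.ofFn (Gen.t : Fin m → Gen m n)).drop j ++
        Gen.s :: (List.ofFn (Gen.t : Fin m → Gen m n)).take j := by
  rw [List.rotate_eq_drop_append_take (by rw [length_wordT]; exact hj)]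
  rfl

theorem wordU_rotate_succ (j : ℕ) (hj : j + 1 ≤ n + 1) :
    (wordU m n).rotate (j + 1) =
      (List.ofFn (Gen.u : Fin n → Gen m n)).drop j ++
        Gen.s :: (List.ofFn (Gen.u : Fin n → Gen m n)).take j := by
  rw [List.rotate_eq_drop_append_take (by rw [length_wordU]; exact hj)]
  rfl

/-- Rewriting along a `T`-rotation inside the first argument of `inter`. -/
theorem L2T : ∀ (p : List (Gen m n)), NoU p → ∀ (q b : List (Gen m n)) (i : ℕ),
    E (inter (p ++ wordT m n ++ q) b) = E (inter (p ++ (wordT m n).rotate i ++ q) b) := by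
  intro p
  induction p with
  | nil =>
    intro _ q b i
    rw [List.nil_append, List.nil_append]
    rw [show (wordT m n).rotate i = (wordT m n).rotate (i % (m + 1)) by
      rw [← List.rotate_mod, length_wordT]]
    rcases hcase : i % (m + 1) with _ | j
    · rw [List.rotate_zero]
    · have hj : j + 1 ≤ m + 1 := by
        have := Nat.mod_lt i (show 0 < m + 1 by omega)
        omega
      rw [wordT_rotate_succ j hj]
      set T := List.ofFn (Gen.t : Fin m → Gen m n) with hT
      have hTT : AllT T := allT_ofFn
      have e1 : inter (wordT m n ++ q) b
          = b.takeWhile isU ++ Gen.s :: (T ++ inter q (b.dropWhile isU).tail) := by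
        show inter (Gen.s :: (T ++ q)) b = _
        rw [inter_s, inter_allT_append hTT]
      have e2 : inter ((T.drop j ++ Gen.s :: T.take j) ++ q) b
          = T.drop j ++ (b.takeWhile isU ++ Gen.s :: (T.take j ++ inter q (b.dropWhile isU).tail)) := by
        have h3 : (T.drop j ++ Gen.s :: T.take j) ++ q = T.drop j ++ Gen.s :: (T.take j ++ q) := by
          simp
        rw [h3, inter_allT_append (allT_drop hTT j), inter_s, inter_allT_append (allT_take hTT j)]
      rw [e1, e2]
      set bt := b.takeWhile isU with hbt
      set Z := inter q (b.dropWhile isU).tail with hZ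
      have hbtU : AllU bt := allU_takeWhile b
      have hrot : E (Gen.s :: T) = E (T.drop j ++ Gen.s :: T.take j) := by
        have := E_rotT (m := m) (n := n) (j + 1)
        rwa [wordT_rotate_succ j hj] at this
      calc E (bt ++ Gen.s :: (T ++ Z))
          = E bt * E (Gen.s :: (T ++ Z)) := E_append _ _
        _ = E bt * (E (Gen.s :: T) * E Z) := by
            rw [show Gen.s :: (T ++ Z) = (Gen.s :: T) ++ Z by simp, E_append]
        _ = E bt * (E (T.drop j ++ Gen.s :: T.take j) * E Z) := by rw [hrot]
        _ = E bt * (E (T.drop j) * E (Gen.s :: T.take j) * E Z) := by rw [E_append]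
        _ = E bt * E (T.drop j) * E (Gen.s :: T.take j) * E Z := by
            rw [mul_assoc, mul_assoc, mul_assoc]
        _ = E (T.drop j) * E bt * E (Gen.s :: T.take j) * E Z := by
            rw [E_mul_comm hbtU (allT_drop hTT j)]
        _ = E (T.drop j) * (E bt * (E (Gen.s :: T.take j) * E Z)) := by
            rw [mul_assoc, mul_assoc]
        _ = E (T.drop j) * (E bt * E (Gen.s :: (T.take j ++ Z))) := by
            rw [show Gen.s :: (T.take j ++ Z) = (Gen.s :: T.take j) ++ Z by simp, E_append]
        _ = E (T.drop j) * E (bt ++ Gen.s :: (T.take j ++ Z)) := by rw [E_append]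
        _ = E (T.drop j ++ (bt ++ Gen.s :: (T.take j ++ Z))) := (E_append _ _).symm
  | cons x p' ih =>
    intro hp q b i
    have hp' : NoU p' := fun y hy => hp y (List.mem_cons_of_mem _ hy)
    match x, hp x (List.mem_cons_self) with
    | Gen.s, _ =>
      rw [List.cons_append, List.cons_append, List.cons_append, List.cons_append,
        inter_s, inter_s, E_append, E_append,
        E_cons Gen.s (inter (p' ++ wordT m n ++ q) (b.dropWhile isU).tail),
        E_cons Gen.s (inter (p' ++ (wordT m n).rotate i ++ q) (b.dropWhile isU).tail),
        ih hp' q (b.dropWhile isU).tail i]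
    | Gen.t i0, _ =>
      rw [List.cons_append, List.cons_append, List.cons_append, List.cons_append,
        inter_t, inter_t, E_cons (Gen.t i0) (inter (p' ++ wordT m n ++ q) b),
        E_cons (Gen.t i0) (inter (p' ++ (wordT m n).rotate i ++ q) b), ih hp' q b i]

/-- Rewriting along a `U`-rotation inside the second argument of `inter`. -/
theorem L2U : ∀ (a : List (Gen m n)), NoU a → ∀ (p : List (Gen m n)), NoT p →
    ∀ (q : List (Gen m n)) (i : ℕ),
    E (inter a (p ++ wordU m n ++ q)) = E (inter a (p ++ (wordU m n).rotate i ++ q)) := by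
  intro a
  induction a with
  | nil =>
    intro _ p _ q i
    rw [inter_nil, inter_nil, E_append, E_append, E_append, E_append, E_rotU i]
  | cons x a' ih =>
    intro ha p hp q i
    have ha' : NoU a' := fun y hy => ha y (List.mem_cons_of_mem _ hy)
    match x, ha x (List.mem_cons_self) with
    | Gen.t i0, _ =>
      rw [inter_t, inter_t, E_cons (Gen.t i0) (inter a' (p ++ wordU m n ++ q)),
        E_cons (Gen.t i0) (inter a' (p ++ (wordU m n).rotate i ++ q)), ih ha' p hp q i]
    | Gen.s, _ =>
      have hsplit : p.takeWhile isU ++ p.dropWhile isU = p :=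
        List.takeWhile_append_dropWhile
      have hp0U : AllU (p.takeWhile isU) := allU_takeWhile p
      rcases hpr : p.dropWhile isU with _ | ⟨x0, pr'⟩
      · -- p consists of u's only
        have hpU : AllU p := by
          rw [← hsplit, hpr, List.append_nil]
          exact hp0U
        set U := List.ofFn (Gen.u : Fin n → Gen m n) with hU
        have hUU : AllU U := allU_ofFn
        have hb : p ++ wordU m n ++ q = p ++ (Gen.s :: (U ++ q)) := by
          show p ++ (Gen.s :: U) ++ q = _
          simp
        have e1 : inter (Gen.s :: a') (p ++ wordU m n ++ q)
            = p ++ Gen.s :: inter a' (U ++ q) := by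
          rw [hb, inter_s, takeWhile_allP_append hpU, dropWhile_allP_append hpU,
            List.takeWhile_cons_of_neg (by simp [isU]), List.dropWhile_cons_of_neg (by simp [isU])]
          simp
        rw [e1]
        rw [show (wordU m n).rotate i = (wordU m n).rotate (i % (n + 1)) by
          rw [← List.rotate_mod, length_wordU]]
        rcases hcase : i % (n + 1) with _ | j
        · rw [List.rotate_zero, ← e1]
        · have hj : j + 1 ≤ n + 1 := by
            have := Nat.mod_lt i (show 0 < n + 1 by omega)
            omega
          rw [wordU_rotate_succ j hj]
          have e2 : inter (Gen.s :: a') (p ++ (U.drop j ++ Gen.s :: U.take j) ++ q)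
              = (p ++ U.drop j) ++ Gen.s :: inter a' (U.take j ++ q) := by
            have h3 : p ++ (U.drop j ++ Gen.s :: U.take j) ++ q
                = (p ++ U.drop j) ++ (Gen.s :: (U.take j ++ q)) := by simp
            have hpdU : AllU (p ++ U.drop j) := by
              intro y hy
              rcases List.mem_append.mp hy with hy | hy
              · exact hpU y hy
              · exact allU_drop hUU j y hy
            rw [h3, inter_s, takeWhile_allP_append hpdU, dropWhile_allP_append hpdU,
              List.takeWhile_cons_of_neg (by simp [isU]), List.dropWhile_cons_of_neg (by simp [isU])]
            simp
          rw [e2]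
          have hrot : E (Gen.s :: U) = E (U.drop j ++ Gen.s :: U.take j) := by
            have := E_rotU (m := m) (n := n) (j + 1)
            rwa [wordU_rotate_succ j hj] at this
          calc E (p ++ Gen.s :: inter a' (U ++ q))
              = E p * E (Gen.s :: inter a' (U ++ q)) := E_append _ _
            _ = E p * (E [Gen.s] * E (inter a' (U ++ q))) := by rw [E_cons]
            _ = E p * (E [Gen.s] * (E U * E (inter a' q))) := by
                rw [E_inter_U_peel hUU ha' q]
            _ = E p * (E [Gen.s] * E U * E (inter a' q)) := by rw [mul_assoc (E [Gen.s])]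
            _ = E p * (E (Gen.s :: U) * E (inter a' q)) := by rw [← E_cons]
            _ = E p * (E (U.drop j ++ Gen.s :: U.take j) * E (inter a' q)) := by rw [hrot]
            _ = E p * (E (U.drop j) * E (Gen.s :: U.take j) * E (inter a' q)) := by rw [E_append]
            _ = E p * (E (U.drop j) * (E [Gen.s] * E (U.take j)) * E (inter a' q)) := by
                rw [← E_cons]
            _ = E p * E (U.drop j) * E [Gen.s] * (E (U.take j) * E (inter a' q)) := by
                rw [← mul_assoc, ← mul_assoc, ← mul_assoc, mul_assoc _ (E (U.take j))]
            _ = E p * E (U.drop j) * E [Gen.s] * E (U.take j ++ inter a' q) := by rw [E_append]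
            _ = E (p ++ U.drop j) * E [Gen.s] * E (inter a' (U.take j ++ q)) := by
                rw [E_append p, E_inter_U_peel (allU_take hUU j) ha' q, E_append]
            _ = E (p ++ U.drop j) * E (Gen.s :: inter a' (U.take j ++ q)) := by
                rw [mul_assoc, ← E_cons]
            _ = E ((p ++ U.drop j) ++ Gen.s :: inter a' (U.take j ++ q)) := (E_append _ _).symm
      · -- p contains an s
        have hx0 : x0 = Gen.s := by
          have h1 : isU x0 = false := dropWhile_head_false hpr
          have h2 : isT x0 = false := by
            apply hp
            rw [← hsplit, hpr]
            exact List.mem_append_right _ (List.mem_cons_self)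
          exact eq_s_of_no h2 h1
        subst hx0
        have hb : ∀ c : List (Gen m n), p ++ c ++ q = p.takeWhile isU ++ (Gen.s :: (pr' ++ c ++ q)) := by
          intro c
          conv_lhs => rw [← hsplit, hpr]
          simp
        have hkey : ∀ c : List (Gen m n),
            inter (Gen.s :: a') (p ++ c ++ q)
              = p.takeWhile isU ++ Gen.s :: inter a' (pr' ++ c ++ q) := by
          intro c
          rw [hb c, inter_s, takeWhile_allP_append hp0U, dropWhile_allP_append hp0U,
            List.takeWhile_cons_of_neg (by simp [isU]), List.dropWhile_cons_of_neg (by simp [isU])]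
          simp
        rw [hkey, hkey]
        have hpr' : NoT pr' := by
          intro y hy
          apply hp
          rw [← hsplit, hpr]
          exact List.mem_append_right _ (List.mem_cons_of_mem _ hy)
        rw [E_append, E_append,
          E_cons Gen.s (inter a' (pr' ++ wordU m n ++ q)),
          E_cons Gen.s (inter a' (pr' ++ (wordU m n).rotate i ++ q)), ih ha' pr' hpr' q i]

end Inter

section Final

variable {m n : ℕ}

/-- The `{s,t}`-word underlying the `t`-shadow. -/
def fT (w : List (Gen m n)) : List (Gen m n) := (shT w).map kT

/-- The `{s,u}`-word underlying the `u`-shadow. -/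
def fU (w : List (Gen m n)) : List (Gen m n) := (shU w).map kU

theorem kT_zero : kT (0 : Fin (m + 1)) = (Gen.s : Gen m n) := by simp [kT]

theorem kT_succ (i : Fin m) : kT i.succ = (Gen.t i : Gen m n) := by simp [kT]

theorem kU_zero : kU (0 : Fin (n + 1)) = (Gen.s : Gen m n) := by simp [kU]

theorem kU_succ (j : Fin n) : kU j.succ = (Gen.u j : Gen m n) := by simp [kU]

theorem fT_cons_s (w : List (Gen m n)) : fT (Gen.s :: w) = Gen.s :: fT w := by
  unfold fT shT
  rw [List.filterMap_cons_some (show sigT (Gen.s : Gen m n) = some 0 from rfl),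
    List.map_cons, kT_zero]

theorem fT_cons_t (i : Fin m) (w : List (Gen m n)) : fT (Gen.t i :: w) = Gen.t i :: fT w := by
  unfold fT shT
  rw [List.filterMap_cons_some (show sigT (Gen.t i : Gen m n) = some i.succ from rfl),
    List.map_cons, kT_succ]

theorem fT_cons_u (j : Fin n) (w : List (Gen m n)) : fT (Gen.u j :: w) = fT w := by
  unfold fT shT
  rw [List.filterMap_cons_none (show sigT (Gen.u j : Gen m n) = none from rfl)]

theorem fU_cons_s (w : List (Gen m n)) : fU (Gen.s :: w) = Gen.s :: fU w := by
  unfold fU shU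
  rw [List.filterMap_cons_some (show sigU (Gen.s : Gen m n) = some 0 from rfl),
    List.map_cons, kU_zero]

theorem fU_cons_u (j : Fin n) (w : List (Gen m n)) : fU (Gen.u j :: w) = Gen.u j :: fU w := by
  unfold fU shU
  rw [List.filterMap_cons_some (show sigU (Gen.u j : Gen m n) = some j.succ from rfl),
    List.map_cons, kU_succ]

theorem fU_cons_t (i : Fin m) (w : List (Gen m n)) : fU (Gen.t i :: w) = fU w := by
  unfold fU shU
  rw [List.filterMap_cons_none (show sigU (Gen.t i : Gen m n) = none from rfl)]

theorem noU_map_kT (l : List (Fin (m + 1))) : NoU (l.map (kT : Fin (m+1) → Gen m n)) := by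
  intro x hx
  obtain ⟨y, _, rfl⟩ := List.mem_map.mp hx
  induction y using Fin.cases <;> simp [kT, isU]

theorem noT_map_kU (l : List (Fin (n + 1))) : NoT (l.map (kU : Fin (n+1) → Gen m n)) := by
  intro x hx
  obtain ⟨y, _, rfl⟩ := List.mem_map.mp hx
  induction y using Fin.cases <;> simp [kU, isT]

theorem noU_fT (w : List (Gen m n)) : NoU (fT w) := noU_map_kT _

theorem noT_fU (w : List (Gen m n)) : NoT (fU w) := noT_map_kU _

/-- Every word is congruent to the interleaving of its two shadows. -/
theorem L1 (w : List (Gen m n)) : E w = E (inter (fT w) (fU w)) := by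
  induction w with
  | nil => rfl
  | cons x w' ih =>
    cases x with
    | s =>
      rw [fT_cons_s, fU_cons_s, inter_s,
        List.takeWhile_cons_of_neg (show ¬(isU (Gen.s : Gen m n) = true) by simp [isU]),
        List.dropWhile_cons_of_neg (show ¬(isU (Gen.s : Gen m n) = true) by simp [isU]),
        List.tail_cons, List.nil_append,
        E_cons Gen.s w', E_cons Gen.s (inter (fT w') (fU w')), ih]
    | t i =>
      rw [fT_cons_t, fU_cons_t, inter_t, E_cons (Gen.t i) w',
        E_cons (Gen.t i) (inter (fT w') (fU w')), ih]
    | u j =>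
      rw [fT_cons_u, fU_cons_u,
        show (Gen.u j :: fU w') = [Gen.u j] ++ fU w' from rfl,
        E_inter_U_peel (show AllU [Gen.u j] by intro y hy; simp at hy; subst hy; rfl)
          (noU_fT w') (fU w'),
        E_cons (Gen.u j) w', ih]

/-- Steps of the transported `T`-rotation system on `Gen`-words. -/
def StepTW (x y : List (Gen m n)) : Prop :=
  ∃ (p q : List (Gen m n)) (i j : ℕ),
    x = p ++ (wordT m n).rotate i ++ q ∧ y = p ++ (wordT m n).rotate j ++ q

/-- Steps of the transported `U`-rotation system on `Gen`-words. -/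
def StepUW (x y : List (Gen m n)) : Prop :=
  ∃ (p q : List (Gen m n)) (i j : ℕ),
    x = p ++ (wordU m n).rotate i ++ q ∧ y = p ++ (wordU m n).rotate j ++ q

theorem map_kT_finRange : (List.finRange (m + 1)).map kT = wordT m n := by
  rw [List.finRange_succ, List.map_cons, kT_zero, List.map_map, wordT,
    List.ofFn_eq_map]
  have : (kT ∘ Fin.succ : Fin m → Gen m n) = Gen.t := funext kT_succ
  rw [this]

theorem map_kU_finRange : (List.finRange (n + 1)).map kU = wordU m n := by
  rw [List.finRange_succ, List.map_cons, kU_zero, List.map_map, wordU,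
    List.ofFn_eq_map]
  have : (kU ∘ Fin.succ : Fin n → Gen m n) = Gen.u := funext kU_succ
  rw [this]

theorem map_kT_RC (i : ℕ) : (RC (m + 1) i).map kT = ((wordT m n).rotate i : List (Gen m n)) := by
  rw [RC, List.map_rotate, map_kT_finRange]

theorem map_kU_RC (i : ℕ) : (RC (n + 1) i).map kU = ((wordU m n).rotate i : List (Gen m n)) := by
  rw [RC, List.map_rotate, map_kU_finRange]

theorem chainC_TW {x y : List (Fin (m + 1))} (h : ChainC (m + 1) x y) :
    Relation.ReflTransGen (StepTW (m := m) (n := n)) (x.map kT) (y.map kT) := by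
  induction h with
  | refl => exact .refl
  | tail _ hstep ih =>
    obtain ⟨p, q, i, j, hx, hy⟩ := hstep
    refine ih.tail ⟨p.map kT, q.map kT, i, j, ?_, ?_⟩
    · rw [hx, List.map_append, List.map_append, map_kT_RC]
    · rw [hy, List.map_append, List.map_append, map_kT_RC]

theorem chainC_UW {x y : List (Fin (n + 1))} (h : ChainC (n + 1) x y) :
    Relation.ReflTransGen (StepUW (m := m) (n := n)) (x.map kU) (y.map kU) := by
  induction h with
  | refl => exact .refl
  | tail _ hstep ih =>
    obtain ⟨p, q, i, j, hx, hy⟩ := hstep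
    refine ih.tail ⟨p.map kU, q.map kU, i, j, ?_, ?_⟩
    · rw [hx, List.map_append, List.map_append, map_kU_RC]
    · rw [hy, List.map_append, List.map_append, map_kU_RC]

theorem noU_wordT_rotate (i : ℕ) : NoU (((wordT m n).rotate i : List (Gen m n))) := by
  intro x hx
  have hx' : x ∈ wordT m n := List.mem_rotate.mp hx
  simp only [wordT, List.mem_cons] at hx'
  rcases hx' with rfl | hx'
  · rfl
  · obtain ⟨i', rfl⟩ := List.mem_ofFn.mp hx'
    rfl

theorem noT_wordU_rotate (i : ℕ) : NoT (((wordU m n).rotate i : List (Gen m n))) := by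
  intro x hx
  have hx' : x ∈ wordU m n := List.mem_rotate.mp hx
  simp only [wordU, List.mem_cons] at hx'
  rcases hx' with rfl | hx'
  · rfl
  · obtain ⟨i', rfl⟩ := List.mem_ofFn.mp hx'
    rfl

theorem chainTW_E {x y : List (Gen m n)} (h : Relation.ReflTransGen StepTW x y)
    (hx : NoU x) (b : List (Gen m n)) : E (inter x b) = E (inter y b) := by
  revert hx
  induction h using Relation.ReflTransGen.head_induction_on with
  | refl => intro _; rfl
  | head hstep hchain ih =>
    intro hx
    obtain ⟨p, q, i, j, hxx, hz⟩ := hstep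
    subst hxx hz
    have hp : NoU p := fun v hv => hx v (by simp [hv])
    have hq : NoU q := fun v hv => hx v (by simp [hv])
    have hz' : NoU (p ++ (wordT m n).rotate j ++ q) := by
      intro v hv
      simp only [List.mem_append] at hv
      rcases hv with (hv | hv) | hv
      · exact hp v hv
      · exact noU_wordT_rotate j v hv
      · exact hq v hv
    exact ((L2T p hp q b i).symm.trans (L2T p hp q b j)).trans (ih hz')

theorem chainUW_E {x y : List (Gen m n)} (h : Relation.ReflTransGen StepUW x y)
    (hx : NoT x) {a : List (Gen m n)} (ha : NoU a) : E (inter a x) = E (inter a y) := by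
  revert hx
  induction h using Relation.ReflTransGen.head_induction_on with
  | refl => intro _; rfl
  | head hstep hchain ih =>
    intro hx
    obtain ⟨p, q, i, j, hxx, hz⟩ := hstep
    subst hxx hz
    have hp : NoT p := fun v hv => hx v (by simp [hv])
    have hq : NoT q := fun v hv => hx v (by simp [hv])
    have hz' : NoT (p ++ (wordU m n).rotate j ++ q) := by
      intro v hv
      simp only [List.mem_append] at hv
      rcases hv with (hv | hv) | hv
      · exact hp v hv
      · exact noT_wordU_rotate j v hv
      · exact hq v hv
    exact ((L2U a ha p hp q i).symm.trans (L2U a ha p hp q j)).trans (ih hz')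

end Final


/-- For all `m, n ≥ 1`, the monoid `G⁺_{m,n}` is cancellative:
`A·X·B = A·Y·B` implies `X = Y`. -/
theorem GP_cancellative (m n : ℕ) (hm : 1 ≤ m) (hn : 1 ≤ n) :
    ∀ A X Y B : GP m n, A * X * B = A * Y * B → X = Y := by
  intro A X Y B h
  obtain ⟨a, rfl⟩ := PresentedMonoid.surjective_mk A
  obtain ⟨x, rfl⟩ := PresentedMonoid.surjective_mk X
  obtain ⟨y, rfl⟩ := PresentedMonoid.surjective_mk Y
  obtain ⟨b, rfl⟩ := PresentedMonoid.surjective_mk B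
  rw [← map_mul, ← map_mul, ← map_mul, ← map_mul] at h
  set la := FreeMonoid.toList a
  set lx := FreeMonoid.toList x
  set ly := FreeMonoid.toList y
  set lb := FreeMonoid.toList b
  have hch : SChain (Rel m n) (la ++ lx ++ lb) (la ++ ly ++ lb) := schain_of_mk_eq h
  -- T-shadow
  have hT := shT_chain hch
  rw [shT_append, shT_append, shT_append, shT_append, List.append_assoc,
    List.append_assoc] at hT
  have hT1 := chainC_cancel_left (Nat.succ_pos m) (shT la) _ _ hT
  have hT2 : ChainC (m + 1) (shT lx) (shT ly) :=
    chainC_cancel_right (Nat.succ_pos m) (shT lb) _ _ hT1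
  -- U-shadow
  have hU := shU_chain hch
  rw [shU_append, shU_append, shU_append, shU_append, List.append_assoc,
    List.append_assoc] at hU
  have hU1 := chainC_cancel_left (Nat.succ_pos n) (shU la) _ _ hU
  have hU2 : ChainC (n + 1) (shU lx) (shU ly) :=
    chainC_cancel_right (Nat.succ_pos n) (shU lb) _ _ hU1
  -- transport and reconstruct
  have hTW : Relation.ReflTransGen StepTW (fT lx) (fT ly) := chainC_TW hT2
  have hUW : Relation.ReflTransGen StepUW (fU lx) (fU ly) := chainC_UW hU2
  have e : E lx = E ly :=
    (L1 lx).trans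
      (((chainTW_E hTW (noU_fT lx) (fU lx)).trans
        (chainUW_E hUW (noT_fU lx) (noU_fT ly))).trans (L1 ly).symm)
  exact e

end Gmn
end
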